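/- arXiv:1505.00770 — 4 statements merged into one kernel-verified Lean document; each statement's English description precedes it below -/
import Mathlib

section
/- Let Δ : A → A be a weak-2-local derivation on a C*-algebra A, and let p be a projection in a C*-algebra B containing A such that A is a closed two-sided ideal of B. Then the map x ↦ pΔ(x)p from pAp to pAp is a weak-2-local derivation on pAp. -/
/-- A (non-necessarily linear) weak-2-local derivation on a (non-unital) normed complex
algebra `X` (in applications, a C*-algebra): for every `a, b` and every continuous linear
functional `φ` there is a bounded linear derivation `D` agreeing with `Δ` at `a` and `b`
after applying `φ`. -/
def IsWeak2LocalDerivation {X : Type*} [NonUnitalNormedRing X] [NormedSpace ℂ X]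
    (Δ : X → X) : Prop :=
  ∀ a b : X, ∀ φ : X →L[ℂ] ℂ, ∃ D : X →L[ℂ] X,
    (∀ x y : X, D (x * y) = D x * y + x * D y) ∧ φ (Δ a) = φ (D a) ∧ φ (Δ b) = φ (D b)

noncomputable instance nonUnitalSubalgebraNormedSpaceComplex {E : Type*} [NonUnitalNormedRing E]
    [NormedSpace ℂ E] (S : NonUnitalSubalgebra ℂ E) : NormedSpace ℂ S :=
  SubmoduleClass.toNormedSpace (R := ℂ) S

variable {B : Type*} [NonUnitalNormedRing B] [StarRing B] [CStarRing B] [NormedSpace ℂ B]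
  [IsScalarTower ℂ B B] [SMulCommClass ℂ B B] [StarModule ℂ B] [CompleteSpace B]

/-- The corner `pAp` of a subalgebra `A` of `B` by an idempotent `p ∈ B`, realized as the
subalgebra of `A` of those `x` with `p x p = x`. -/
def corner (p : B) (hp : IsIdempotentElem p) (A : NonUnitalSubalgebra ℂ B) :
    NonUnitalSubalgebra ℂ A where
  carrier := {x : A | p * (x : B) * p = (x : B)}
  zero_mem' := by simp
  add_mem' := by
    intro x y hx hy
    simp only [Set.mem_setOf_eq, NonUnitalSubalgebra.coe_add] at *
    rw [mul_add, add_mul, hx, hy]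
  smul_mem' := by
    intro c x hx
    simp only [Set.mem_setOf_eq, NonUnitalSubalgebra.coe_smul] at *
    rw [mul_smul_comm, smul_mul_assoc, hx]
  mul_mem' := by
    intro x y hx hy
    have h2 : ∀ t : B, p * (p * t) = p * t := fun t => by rw [← mul_assoc, hp.eq]
    simp only [Set.mem_setOf_eq, NonUnitalSubalgebra.coe_mul] at *
    calc p * ((x : B) * (y : B)) * p
        = p * ((p * (x : B) * p) * (p * (y : B) * p)) * p := by rw [hx, hy]
      _ = (p * (x : B) * p) * (p * (y : B) * p) := by
          simp only [mul_assoc, h2, hp.eq]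
      _ = (x : B) * (y : B) := by rw [hx, hy]

/-- Let `A` be a C*-algebra which is a closed two-sided ideal of a C*-algebra `B`, let
`Δ : A → A` be a weak-2-local derivation, and let `p` be a projection in `B`.  Then
`x ↦ p Δ(x) p`, as a map from `pAp` to `pAp`, is a weak-2-local derivation on `pAp`. -/
theorem corner_weak2local_derivation (A : NonUnitalSubalgebra ℂ B)
    (hclosed : IsClosed (A : Set B)) (hstar : ∀ x ∈ A, star x ∈ A)
    (hideal : ∀ b : B, ∀ x ∈ A, b * x ∈ A ∧ x * b ∈ A)
    (p : B) (hp : IsIdempotentElem p) (hps : star p = p)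
    (Δ : A → A) (hΔ : IsWeak2LocalDerivation Δ) :
    IsWeak2LocalDerivation (fun x : corner p hp A =>
      (⟨⟨p * ((Δ x : A) : B) * p,
          (hideal p _ ((hideal p _ (Δ (x : A)).2).1)).2⟩,
        by
          show p * (p * ((Δ (x : A) : A) : B) * p) * p = p * ((Δ (x : A) : A) : B) * p
          have h2 : ∀ t : B, p * (p * t) = p * t := fun t => by rw [← mul_assoc, hp.eq]
          calc p * (p * ((Δ (x : A) : A) : B) * p) * p
              = p * (p * (((Δ (x : A) : A) : B) * (p * p))) := by simp only [mul_assoc]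
            _ = p * ((Δ (x : A) : A) : B) * p := by
                rw [h2, hp.eq, mul_assoc]⟩ : corner p hp A)) := by
  intro a b φ
  have h2 : ∀ t : B, p * (p * t) = p * t := fun t => by rw [← mul_assoc, hp.eq]
  have memA : ∀ x : A, p * (x : B) * p ∈ A :=
    fun x => (hideal p _ ((hideal p _ x.2).1)).2
  have memC : ∀ x : A, (⟨p * (x : B) * p, memA x⟩ : A) ∈ corner p hp A := by
    intro x
    show p * (p * (x : B) * p) * p = p * (x : B) * p
    calc p * (p * (x : B) * p) * p = p * (p * ((x : B) * (p * p))) := by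
          simp only [mul_assoc]
      _ = p * (x : B) * p := by rw [h2, hp.eq, mul_assoc]
  -- the compression map `P : A → pAp`
  let Pl : A →ₗ[ℂ] corner p hp A :=
    { toFun := fun x => ⟨⟨p * (x : B) * p, memA x⟩, memC x⟩
      map_add' := by
        intro x y
        apply Subtype.ext; apply Subtype.ext
        show p * ((x : B) + (y : B)) * p = p * (x : B) * p + p * (y : B) * p
        rw [mul_add, add_mul]
      map_smul' := by
        intro c x
        apply Subtype.ext; apply Subtype.ext
        show p * (c • (x : B)) * p = c • (p * (x : B) * p)
        rw [mul_smul_comm, smul_mul_assoc] }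
  let P : A →L[ℂ] corner p hp A := Pl.mkContinuous (‖p‖ * ‖p‖) (by
    intro x
    show ‖p * (x : B) * p‖ ≤ ‖p‖ * ‖p‖ * ‖x‖
    calc ‖p * (x : B) * p‖ ≤ ‖p * (x : B)‖ * ‖p‖ :=
          norm_mul_le _ _
      _ ≤ ‖p‖ * ‖(x : B)‖ * ‖p‖ :=
          mul_le_mul_of_nonneg_right (norm_mul_le _ _) (norm_nonneg _)
      _ = ‖p‖ * ‖p‖ * ‖(x : B)‖ := by ring)
  -- the inclusion `j : pAp → A`
  let jl : corner p hp A →ₗ[ℂ] A :=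
    { toFun := Subtype.val, map_add' := fun _ _ => rfl, map_smul' := fun _ _ => rfl }
  let j : corner p hp A →L[ℂ] A := jl.mkContinuous 1 (fun x => by
    show ‖((x : A) : B)‖ ≤ 1 * ‖((x : A) : B)‖
    rw [one_mul])
  obtain ⟨D, hder, ha, hb⟩ := hΔ (a : A) (b : A) (φ.comp P)
  have key : ∀ y : corner p hp A, p * ((y : A) : B) = ((y : A) : B) ∧
      ((y : A) : B) * p = ((y : A) : B) := by
    intro y
    have hy : p * ((y : A) : B) * p = ((y : A) : B) := y.2
    constructor
    · conv_lhs => rw [← hy]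
      rw [← mul_assoc, ← mul_assoc, hp.eq, hy]
    · conv_lhs => rw [← hy]
      rw [mul_assoc, mul_assoc, hp.eq, ← mul_assoc, hy]
  refine ⟨(P.comp D).comp j, ?_, ?_, ?_⟩
  · intro x y
    apply Subtype.ext; apply Subtype.ext
    have hxy : j (x * y) = (x : A) * (y : A) := rfl
    show p * ((D (j (x * y)) : A) : B) * p =
      (p * ((D (j x) : A) : B) * p) * ((y : A) : B) +
        ((x : A) : B) * (p * ((D (j y) : A) : B) * p)
    rw [hxy, hder]
    have hjx : j x = (x : A) := rfl
    have hjy : j y = (y : A) := rfl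
    rw [hjx, hjy]
    push_cast
    rw [mul_add, add_mul]
    congr 1
    · calc p * (((D (x : A) : A) : B) * ((y : A) : B)) * p
          = p * ((D (x : A) : A) : B) * (((y : A) : B) * p) := by
            simp only [mul_assoc]
        _ = p * ((D (x : A) : A) : B) * (p * ((y : A) : B)) := by
            rw [(key y).2, (key y).1]
        _ = p * ((D (x : A) : A) : B) * p * ((y : A) : B) := by
            simp only [mul_assoc]
    · calc p * (((x : A) : B) * ((D (y : A) : A) : B)) * p
          = (p * ((x : A) : B)) * (((D (y : A) : A) : B) * p) := by
            simp only [mul_assoc]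
        _ = ((x : A) : B) * p * (((D (y : A) : A) : B) * p) := by
            rw [(key x).1, ← (key x).2, mul_assoc (((x : A) : B)) p p, hp.eq]
        _ = ((x : A) : B) * (p * ((D (y : A) : A) : B) * p) := by
            simp only [mul_assoc]
  · simpa [P, Pl, j, jl] using ha
  · simpa [P, Pl, j, jl] using hb
end

section
/- Let H be a complex Hilbert space and Δ : K(H) → K(H) a weak-2-local derivation on the C*-algebra of compact operators. Then Δ(a + b) = Δ(a) + Δ(b) for all finite-rank operators a, b on H. -/
set_option synthInstance.maxHeartbeats 1000000
set_option maxHeartbeats 1000000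

variable (H : Type*) [NormedAddCommGroup H] [InnerProductSpace ℂ H] [CompleteSpace H]

/-- The C*-algebra `K(H)` of compact operators on `H`, as a (non-unital) subalgebra of
`B(H) = H →L[ℂ] H`. -/
noncomputable def compactOps : NonUnitalSubalgebra ℂ (H →L[ℂ] H) where
  carrier := {T | IsCompactOperator T}
  zero_mem' := isCompactOperator_zero
  add_mem' := fun hf hg => hf.add hg
  smul_mem' := fun c T hT => hT.smul c
  mul_mem' := fun {_ g} hf _ => hf.comp_clm g

/-- `T` is a finite-rank operator. -/
def IsFiniteRankOp {H : Type*} [NormedAddCommGroup H] [InnerProductSpace ℂ H]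
    (T : H →L[ℂ] H) : Prop :=
  FiniteDimensional ℂ (LinearMap.range (T : H →ₗ[ℂ] H))

local notation "⟪" x ", " y "⟫" => @inner ℂ _ _ x y

section W2LAux
variable {H}


/-- Trace of a finite-rank linear endomorphism (junk value 0 otherwise). -/
noncomputable def ftr (f : H →ₗ[ℂ] H) : ℂ :=
  open Classical in
  if h : FiniteDimensional ℂ (LinearMap.range f) then
    @LinearMap.trace ℂ _ (LinearMap.range f) _ _
      (f.restrict (fun x _ => LinearMap.mem_range_self f x))
  else 0

lemma ftr_eq (W : Submodule ℂ H) [FiniteDimensional ℂ W] (f : H →ₗ[ℂ] H)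
    (h : LinearMap.range f ≤ W) :
    ftr f = LinearMap.trace ℂ W (f.restrict (fun x _ => h (LinearMap.mem_range_self f x))) := by
  haveI : FiniteDimensional ℂ (LinearMap.range f) := Submodule.finiteDimensional_of_le h
  rw [ftr, dif_pos this]
  set W₀ := LinearMap.range f
  let ι : W₀ →ₗ[ℂ] W := Submodule.inclusion h
  let f₀ : W →ₗ[ℂ] W₀ := LinearMap.codRestrict W₀ (f ∘ₗ W.subtype)
    (fun x => LinearMap.mem_range_self f (x : H))
  have h1 : (f.restrict (fun x _ => h (LinearMap.mem_range_self f x)) : W →ₗ[ℂ] W) = ι ∘ₗ f₀ :=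
    LinearMap.ext fun x => Subtype.ext rfl
  have h2 : (f.restrict (fun x _ => LinearMap.mem_range_self f x) : W₀ →ₗ[ℂ] W₀) = f₀ ∘ₗ ι :=
    LinearMap.ext fun x => Subtype.ext rfl
  rw [h1, h2, LinearMap.trace_comp_comm']

/-- the workhorse: trace of an operator factored through a finite-dimensional space. -/
lemma ftr_fact {V : Type*} [AddCommGroup V] [Module ℂ V] [Module.Finite ℂ V]
    (u : H →ₗ[ℂ] V) (v : V →ₗ[ℂ] H) :
    ftr (v ∘ₗ u) = LinearMap.trace ℂ V (u ∘ₗ v) := by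
  set W := LinearMap.range v with hW
  have h : LinearMap.range (v ∘ₗ u) ≤ W := LinearMap.range_comp_le_range u v
  rw [ftr_eq W _ h]
  let v₀ : V →ₗ[ℂ] W := LinearMap.codRestrict W v (fun x => LinearMap.mem_range_self v x)
  have h1 : ((v ∘ₗ u).restrict (fun x _ => h (LinearMap.mem_range_self _ x)) : W →ₗ[ℂ] W)
      = v₀ ∘ₗ (u ∘ₗ W.subtype) :=
    LinearMap.ext fun x => Subtype.ext rfl
  have h2 : W.subtype ∘ₗ v₀ = v := LinearMap.ext fun x => rfl
  rw [h1, LinearMap.trace_comp_comm', LinearMap.comp_assoc, h2]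


lemma ftr_zero : ftr (0 : H →ₗ[ℂ] H) = 0 := by
  have h := ftr_fact (0 : H →ₗ[ℂ] ℂ) (0 : ℂ →ₗ[ℂ] H)
  simpa using h

lemma ftr_add (f g : H →ₗ[ℂ] H) (hf : FiniteDimensional ℂ (LinearMap.range f))
    (hg : FiniteDimensional ℂ (LinearMap.range g)) : ftr (f + g) = ftr f + ftr g := by
  haveI := hf; haveI := hg
  set W := LinearMap.range f ⊔ LinearMap.range g with hW
  haveI : FiniteDimensional ℂ W := Submodule.finiteDimensional_sup _ _
  let f₀ : H →ₗ[ℂ] W := LinearMap.codRestrict W f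
    (fun x => (le_sup_left : LinearMap.range f ≤ W) (LinearMap.mem_range_self f x))
  let g₀ : H →ₗ[ℂ] W := LinearMap.codRestrict W g
    (fun x => (le_sup_right : LinearMap.range g ≤ W) (LinearMap.mem_range_self g x))
  have hf' : W.subtype ∘ₗ f₀ = f := LinearMap.ext fun x => rfl
  have hg' : W.subtype ∘ₗ g₀ = g := LinearMap.ext fun x => rfl
  have e1 : ftr f = LinearMap.trace ℂ W (f₀ ∘ₗ W.subtype) := by rw [← hf', ftr_fact]
  have e2 : ftr g = LinearMap.trace ℂ W (g₀ ∘ₗ W.subtype) := by rw [← hg', ftr_fact]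
  have hsum : f + g = W.subtype ∘ₗ (f₀ + g₀) := by rw [LinearMap.comp_add, hf', hg']
  rw [hsum, ftr_fact, LinearMap.add_comp, map_add, e1, e2]

lemma ftr_smul (c : ℂ) (f : H →ₗ[ℂ] H) (hf : FiniteDimensional ℂ (LinearMap.range f)) :
    ftr (c • f) = c * ftr f := by
  haveI := hf
  set W := LinearMap.range f with hW
  let f₀ : H →ₗ[ℂ] W := LinearMap.codRestrict W f (fun x => LinearMap.mem_range_self f x)
  have hf' : W.subtype ∘ₗ f₀ = f := LinearMap.ext fun x => rfl
  have e1 : ftr f = LinearMap.trace ℂ W (f₀ ∘ₗ W.subtype) := by rw [← hf', ftr_fact]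
  have hs : c • f = W.subtype ∘ₗ (c • f₀) := LinearMap.ext fun x => rfl
  rw [hs, ftr_fact, LinearMap.smul_comp, map_smul, e1, smul_eq_mul]

lemma ftr_comm (f g : H →ₗ[ℂ] H) (hg : FiniteDimensional ℂ (LinearMap.range g)) :
    ftr (f ∘ₗ g) = ftr (g ∘ₗ f) := by
  haveI := hg
  set W := LinearMap.range g with hW
  let g₀ : H →ₗ[ℂ] W := LinearMap.codRestrict W g (fun x => LinearMap.mem_range_self g x)
  have h1 : f ∘ₗ g = (f ∘ₗ W.subtype) ∘ₗ g₀ := LinearMap.ext fun x => rfl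
  have h2 : g ∘ₗ f = W.subtype ∘ₗ (g₀ ∘ₗ f) := LinearMap.ext fun x => rfl
  rw [h1, h2, ftr_fact, ftr_fact, LinearMap.comp_assoc]

/-- The rank-one operator `x ↦ ⟪η, x⟫ • ξ`. -/
noncomputable def rk (ξ η : H) : H →L[ℂ] H := (innerSL ℂ η).smulRight ξ

@[simp] lemma rk_apply (ξ η x : H) : rk ξ η x = ⟪η, x⟫ • ξ := rfl

lemma ftr_rk (ξ η : H) : ftr ((rk ξ η : H →L[ℂ] H) : H →ₗ[ℂ] H) = ⟪η, ξ⟫ := by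
  let u : H →ₗ[ℂ] ℂ := (innerSL ℂ η : H →L[ℂ] ℂ)
  let v : ℂ →ₗ[ℂ] H := LinearMap.toSpanSingleton ℂ H ξ
  have h : ((rk ξ η : H →L[ℂ] H) : H →ₗ[ℂ] H) = v ∘ₗ u := LinearMap.ext fun x => rfl
  have h2 : u ∘ₗ v = (⟪η, ξ⟫ : ℂ) • LinearMap.id := by
    refine LinearMap.ext fun c => ?_
    simp [u, v, LinearMap.toSpanSingleton_apply, inner_smul_right, mul_comm, smul_eq_mul]
  rw [h, ftr_fact, h2, map_smul, LinearMap.trace_id, smul_eq_mul]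
  simp


section frk
variable {f g : H →L[ℂ] H}

lemma frk_zero : IsFiniteRankOp (0 : H →L[ℂ] H) := by
  unfold IsFiniteRankOp
  rw [ContinuousLinearMap.coe_zero, LinearMap.range_zero]
  infer_instance

lemma frk_add (hf : IsFiniteRankOp f) (hg : IsFiniteRankOp g) : IsFiniteRankOp (f + g) := by
  haveI : FiniteDimensional ℂ (LinearMap.range (f : H →ₗ[ℂ] H)) := hf
  haveI : FiniteDimensional ℂ (LinearMap.range (g : H →ₗ[ℂ] H)) := hg
  refine Submodule.finiteDimensional_of_le (S₂ := LinearMap.range (f : H →ₗ[ℂ] H) ⊔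
    LinearMap.range (g : H →ₗ[ℂ] H)) ?_
  rintro _ ⟨x, rfl⟩
  exact Submodule.add_mem_sup (LinearMap.mem_range_self _ x) (LinearMap.mem_range_self _ x)

lemma frk_smul (c : ℂ) (hf : IsFiniteRankOp f) : IsFiniteRankOp (c • f) := by
  haveI : FiniteDimensional ℂ (LinearMap.range (f : H →ₗ[ℂ] H)) := hf
  refine Submodule.finiteDimensional_of_le (S₂ := LinearMap.range (f : H →ₗ[ℂ] H)) ?_
  rintro _ ⟨x, rfl⟩
  exact Submodule.smul_mem _ c (LinearMap.mem_range_self _ x)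

lemma frk_neg (hf : IsFiniteRankOp f) : IsFiniteRankOp (-f) := by
  rw [← neg_one_smul ℂ f]; exact frk_smul _ hf

lemma frk_sub (hf : IsFiniteRankOp f) (hg : IsFiniteRankOp g) : IsFiniteRankOp (f - g) := by
  rw [sub_eq_add_neg]; exact frk_add hf (frk_neg hg)

lemma frk_mul_left (hf : IsFiniteRankOp f) : IsFiniteRankOp (f * g) := by
  haveI : FiniteDimensional ℂ (LinearMap.range (f : H →ₗ[ℂ] H)) := hf
  refine Submodule.finiteDimensional_of_le (S₂ := LinearMap.range (f : H →ₗ[ℂ] H)) ?_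
  rintro _ ⟨x, rfl⟩
  exact LinearMap.mem_range_self _ _

lemma frk_mul_right (hg : IsFiniteRankOp g) : IsFiniteRankOp (f * g) := by
  haveI : FiniteDimensional ℂ (LinearMap.range (g : H →ₗ[ℂ] H)) := hg
  unfold IsFiniteRankOp
  have : ((f * g : H →L[ℂ] H) : H →ₗ[ℂ] H) = (f : H →ₗ[ℂ] H) ∘ₗ (g : H →ₗ[ℂ] H) := rfl
  rw [this, LinearMap.range_comp]
  infer_instance

lemma frk_rk (ξ η : H) : IsFiniteRankOp (rk ξ η) := by
  refine Submodule.finiteDimensional_of_le (S₂ := Submodule.span ℂ {ξ}) ?_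
  rintro _ ⟨x, rfl⟩
  exact Submodule.smul_mem _ _ (Submodule.mem_span_singleton_self ξ)

end frk

lemma rk_isCompact (ξ η : H) : IsCompactOperator (rk ξ η : H →L[ℂ] H) := by
  refine ⟨(fun c : ℂ => c • ξ) '' Metric.closedBall 0 ‖η‖, ?_, ?_⟩
  · exact (isCompact_closedBall 0 ‖η‖).image (continuous_id.smul continuous_const)
  · filter_upwards [Metric.closedBall_mem_nhds (0 : H) one_pos] with x hx
    refine ⟨⟪η, x⟫, ?_, rfl⟩
    simp only [Metric.mem_closedBall, dist_zero_right] at hx ⊢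
    calc ‖⟪η, x⟫‖ ≤ ‖η‖ * ‖x‖ := norm_inner_le_norm η x
    _ ≤ ‖η‖ * 1 := by gcongr
    _ = ‖η‖ := mul_one _

lemma exists_rk_decomp [CompleteSpace H] (c : H →L[ℂ] H) (hc : IsFiniteRankOp c) :
    ∃ (n : ℕ) (ξ η : Fin n → H), c = ∑ i, rk (ξ i) (η i) := by
  haveI : FiniteDimensional ℂ (LinearMap.range (c : H →ₗ[ℂ] H)) := hc
  set W := LinearMap.range (c : H →ₗ[ℂ] H) with hWdef
  let b := stdOrthonormalBasis ℂ W
  refine ⟨_, fun i => (b i : H), fun i => (ContinuousLinearMap.adjoint c) (b i : H), ?_⟩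
  ext v
  have hv : c v ∈ W := LinearMap.mem_range_self _ v
  have hr := b.sum_repr' (⟨c v, hv⟩ : W)
  have hr' : ∑ i, ⟪((b i : W) : H), c v⟫ • ((b i : W) : H) = c v := by
    have := congrArg (W.subtype) hr
    simpa [Submodule.coe_inner] using this
  rw [ContinuousLinearMap.sum_apply]
  have he : ∀ i, rk ((b i : H)) ((ContinuousLinearMap.adjoint c) (b i : H)) v
      = ⟪((b i : W) : H), c v⟫ • ((b i : W) : H) := by
    intro i
    rw [rk_apply, ContinuousLinearMap.adjoint_inner_left]
  rw [Finset.sum_congr rfl (fun i _ => he i), hr']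

section Klevel
variable [CompleteSpace H]

/-- rank-one operator as an element of `K(H)`. -/
noncomputable def rkK (ξ η : H) : compactOps H := ⟨rk ξ η, rk_isCompact ξ η⟩

/-- Trace on (finite-rank elements of) `K(H)`. -/
noncomputable def TR (x : compactOps H) : ℂ := ftr (((x : H →L[ℂ] H)) : H →ₗ[ℂ] H)

lemma TR_zero : TR (0 : compactOps H) = 0 := ftr_zero

lemma TR_add (x y : compactOps H) (hx : IsFiniteRankOp (x : H →L[ℂ] H))
    (hy : IsFiniteRankOp (y : H →L[ℂ] H)) : TR (x + y) = TR x + TR y :=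
  ftr_add _ _ hx hy

lemma TR_smul (c : ℂ) (x : compactOps H) (hx : IsFiniteRankOp (x : H →L[ℂ] H)) :
    TR (c • x) = c * TR x :=
  ftr_smul c _ hx

lemma TR_neg (y : compactOps H) (hy : IsFiniteRankOp (y : H →L[ℂ] H)) :
    TR (-y) = - TR y := by
  show ftr _ = _
  have h : (((-y : compactOps H) : H →L[ℂ] H) : H →ₗ[ℂ] H)
      = (-1 : ℂ) • (((y : H →L[ℂ] H)) : H →ₗ[ℂ] H) := by
    rw [neg_one_smul]; rfl
  rw [h, ftr_smul _ _ hy]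
  show _ = -(ftr _); ring

lemma TR_sub (x y : compactOps H) (hx : IsFiniteRankOp (x : H →L[ℂ] H))
    (hy : IsFiniteRankOp (y : H →L[ℂ] H)) : TR (x - y) = TR x - TR y := by
  rw [sub_eq_add_neg, TR_add x (-y) hx (frk_neg hy), TR_neg y hy, ← sub_eq_add_neg]

lemma TR_mul_comm (x y : compactOps H) (hy : IsFiniteRankOp (y : H →L[ℂ] H)) :
    TR (x * y) = TR (y * x) :=
  ftr_comm _ _ hy

lemma TR_sum {n : ℕ} (f : Fin n → compactOps H)
    (hf : ∀ i, IsFiniteRankOp ((f i : H →L[ℂ] H))) :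
    IsFiniteRankOp (((∑ i, f i : compactOps H)) : H →L[ℂ] H) ∧
      TR (∑ i, f i) = ∑ i, TR (f i) := by
  classical
  induction n with
  | zero => simpa using ⟨frk_zero, TR_zero⟩
  | succ m ih =>
    have h1 : (∑ i : Fin (m+1), f i) = (∑ i : Fin m, f i.castSucc) + f (Fin.last m) :=
      Fin.sum_univ_castSucc f
    obtain ⟨ih1, ih2⟩ := ih (fun i => f i.castSucc) (fun i => hf _)
    constructor
    · rw [h1]; exact frk_add ih1 (hf _)
    · rw [h1, TR_add _ _ ih1 (hf _), ih2, Fin.sum_univ_castSucc (fun i => TR (f i))]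

lemma TR_rkK_mul (ξ η : H) (z : compactOps H) :
    TR (rkK ξ η * z) = ⟪η, (z : H →L[ℂ] H) ξ⟫ := by
  have h : ((rkK ξ η * z : compactOps H) : H →L[ℂ] H)
      = rk ξ (ContinuousLinearMap.adjoint (z : H →L[ℂ] H) η) := by
    ext x
    show rk ξ η ((z : H →L[ℂ] H) x) = _
    rw [rk_apply, rk_apply, ContinuousLinearMap.adjoint_inner_left]
  show ftr _ = _
  rw [h, ftr_rk, ContinuousLinearMap.adjoint_inner_left]

/-- The functional `z ↦ ⟪η, z ξ⟫` on `K(H)`. -/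
noncomputable def evφ (ξ η : H) : compactOps H →L[ℂ] ℂ :=
  LinearMap.mkContinuous
    { toFun := fun z => ⟪η, (z : H →L[ℂ] H) ξ⟫
      map_add' := fun z w => by
        show ⟪η, ((z : H →L[ℂ] H) + (w : H →L[ℂ] H)) ξ⟫ = _
        rw [ContinuousLinearMap.add_apply, inner_add_right]
      map_smul' := fun c z => by
        show ⟪η, (c • (z : H →L[ℂ] H)) ξ⟫ = _
        rw [ContinuousLinearMap.smul_apply, inner_smul_right]; rfl }
    (‖η‖ * ‖ξ‖) (fun z => by
      calc ‖⟪η, (z : H →L[ℂ] H) ξ⟫‖ ≤ ‖η‖ * ‖(z : H →L[ℂ] H) ξ‖ := norm_inner_le_norm _ _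
        _ ≤ ‖η‖ * (‖(z : H →L[ℂ] H)‖ * ‖ξ‖) := by
            gcongr; exact (z : H →L[ℂ] H).le_opNorm ξ
        _ = ‖η‖ * ‖ξ‖ * ‖z‖ := by rw [show ‖(z : H →L[ℂ] H)‖ = ‖z‖ from rfl]; ring)

lemma evφ_apply (ξ η : H) (z : compactOps H) : evφ ξ η z = ⟪η, (z : H →L[ℂ] H) ξ⟫ := rfl

end Klevel

section Deriv
variable [CompleteSpace H]
variable (D : compactOps H →L[ℂ] compactOps H)
  (hD : ∀ x y : compactOps H, D (x * y) = D x * y + x * D y)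

include hD in
lemma D_idem {q : compactOps H} (hq : q * q = q) (hfq : IsFiniteRankOp (q : H →L[ℂ] H)) :
    IsFiniteRankOp ((D q : compactOps H) : H →L[ℂ] H) ∧ TR (D q) = 0 := by
  have hL := hD q q
  rw [hq] at hL
  have h1 : IsFiniteRankOp ((D q * q : compactOps H) : H →L[ℂ] H) := frk_mul_right hfq
  have h2 : IsFiniteRankOp ((q * D q : compactOps H) : H →L[ℂ] H) := frk_mul_left hfq
  have hfin : IsFiniteRankOp ((D q : compactOps H) : H →L[ℂ] H) := by
    rw [hL]; exact frk_add h1 h2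
  have e1 : q * (D q * q) * q = q * D q * q := by
    rw [← mul_assoc q (D q) q, mul_assoc (q * D q) q q, hq]
  have e2 : q * (q * D q) * q = q * D q * q := by
    rw [← mul_assoc q q (D q), hq]
  have he : q * D q * q = q * D q * q + q * D q * q := by
    conv_lhs => rw [hL]
    rw [mul_add, add_mul, e1, e2]
  have hs : q * D q * q = 0 := left_eq_add.mp he
  have hDqq : D q * q * q = D q * q := by rw [mul_assoc, hq]
  have t2 : q * (D q * q) = 0 := by rw [← mul_assoc]; exact hs
  have t1 : TR (D q * q) = 0 := by
    have : TR (D q * q) = TR (q * (D q * q)) := by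
      conv_lhs => rw [← hDqq]
      exact TR_mul_comm (D q * q) q hfq
    rw [this, t2, TR_zero]
  have hcomm : TR (q * D q) = TR (D q * q) := TR_mul_comm q (D q) hfin
  refine ⟨hfin, ?_⟩
  rw [hL, TR_add _ _ h1 h2, hcomm, t1, add_zero]

include hD in
lemma D_rk' {ξ η : H} (hne : ⟪η, ξ⟫ ≠ 0) :
    IsFiniteRankOp ((D (rkK ξ η) : compactOps H) : H →L[ℂ] H) ∧ TR (D (rkK ξ η)) = 0 := by
  set s : ℂ := ⟪η, ξ⟫ with hs
  set q : compactOps H := s⁻¹ • rkK ξ η with hqdef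
  have hrkmul : rk ξ η * rk ξ η = s • rk ξ η := by
    ext x
    show rk ξ η (rk ξ η x) = (s • rk ξ η) x
    simp only [ContinuousLinearMap.smul_apply, rk_apply, inner_smul_right, smul_smul]
    congr 1; ring
  have hq : q * q = q := by
    apply Subtype.ext
    show (s⁻¹ • rk ξ η) * (s⁻¹ • rk ξ η) = s⁻¹ • rk ξ η
    rw [smul_mul_smul_comm, hrkmul, smul_smul]
    congr 1
    field_simp
  have hfq : IsFiniteRankOp (q : H →L[ℂ] H) := frk_smul _ (frk_rk ξ η)
  obtain ⟨hfinq, htrq⟩ := D_idem D hD hq hfq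
  have hrkq : rkK ξ η = s • q := by
    rw [hqdef, smul_smul, mul_inv_cancel₀ hne, one_smul]
  have hDs : D (rkK ξ η) = s • D q := by rw [hrkq, map_smul]
  constructor
  · rw [hDs]; exact frk_smul _ hfinq
  · rw [hDs, TR_smul _ _ hfinq, htrq, mul_zero]

include hD in
lemma D_rk (ξ η : H) :
    IsFiniteRankOp ((D (rkK ξ η) : compactOps H) : H →L[ℂ] H) ∧ TR (D (rkK ξ η)) = 0 := by
  by_cases hξ : ξ = 0
  · have h0 : rkK ξ η = 0 := by
      apply Subtype.ext
      show rk ξ η = 0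
      ext x; rw [rk_apply, hξ, smul_zero]; rfl
    rw [h0, map_zero]
    exact ⟨frk_zero, TR_zero⟩
  by_cases hne : ⟪η, ξ⟫ ≠ 0
  · exact D_rk' D hD hne
  push_neg at hne
  have h1 : ⟪η + ξ, ξ⟫ ≠ 0 := by
    rw [inner_add_left, hne, zero_add]
    simpa [inner_self_eq_zero] using hξ
  have h2 : ⟪ξ, ξ⟫ ≠ 0 := by simpa [inner_self_eq_zero] using hξ
  have hsplit : rkK ξ η = rkK ξ (η + ξ) - rkK ξ ξ := by
    apply Subtype.ext
    show rk ξ η = rk ξ (η + ξ) - rk ξ ξ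
    ext x
    show _ = rk ξ (η + ξ) x - rk ξ ξ x
    rw [rk_apply, rk_apply, rk_apply, inner_add_left, add_smul, add_sub_cancel_right]
  obtain ⟨f1, t1⟩ := D_rk' D hD h1
  obtain ⟨f2, t2⟩ := D_rk' D hD h2
  have hDsplit : D (rkK ξ η) = D (rkK ξ (η + ξ)) - D (rkK ξ ξ) := by rw [hsplit, map_sub]
  constructor
  · rw [hDsplit]; exact frk_sub f1 f2
  · rw [hDsplit, TR_sub _ _ f1 f2, t1, t2, sub_zero]

include hD in
lemma D_fin (x : compactOps H) (hx : IsFiniteRankOp (x : H →L[ℂ] H)) :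
    IsFiniteRankOp ((D x : compactOps H) : H →L[ℂ] H) ∧ TR (D x) = 0 := by
  obtain ⟨n, ξ, η, hrep⟩ := exists_rk_decomp (x : H →L[ℂ] H) hx
  have hxK : x = ∑ i, rkK (ξ i) (η i) := by
    apply Subtype.ext
    push_cast
    exact hrep
  have hDx : D x = ∑ i, D (rkK (ξ i) (η i)) := by rw [hxK, map_sum]
  obtain ⟨hfin, htr⟩ := TR_sum (fun i => D (rkK (ξ i) (η i)))
    (fun i => (D_rk D hD (ξ i) (η i)).1)
  constructor
  · rw [hDx]; exact hfin
  · rw [hDx, htr]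
    exact Finset.sum_eq_zero fun i _ => (D_rk D hD (ξ i) (η i)).2

end Deriv

section Main
variable [CompleteSpace H]

lemma exists_phi (x : compactOps H) (hx : IsFiniteRankOp (x : H →L[ℂ] H)) :
    ∃ φ : compactOps H →L[ℂ] ℂ, ∀ z : compactOps H, φ z = TR (x * z) := by
  obtain ⟨n, ξ, η, hrep⟩ := exists_rk_decomp (x : H →L[ℂ] H) hx
  have hxK : x = ∑ i, rkK (ξ i) (η i) := by
    apply Subtype.ext; push_cast; exact hrep
  refine ⟨∑ i, evφ (ξ i) (η i), fun z => ?_⟩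
  have h1 : (∑ i, evφ (ξ i) (η i)) z = ∑ i, TR (rkK (ξ i) (η i) * z) := by
    rw [ContinuousLinearMap.sum_apply]
    exact Finset.sum_congr rfl fun i _ => by rw [evφ_apply, TR_rkK_mul]
  have h2 : x * z = ∑ i, rkK (ξ i) (η i) * z := by rw [hxK, Finset.sum_mul]
  rw [h1, h2]
  exact ((TR_sum (fun i => rkK (ξ i) (η i) * z) (fun i => frk_mul_left (frk_rk _ _))).2).symm

lemma TR_x_Dx (D : compactOps H →L[ℂ] compactOps H)
    (hD : ∀ x y : compactOps H, D (x * y) = D x * y + x * D y)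
    (x : compactOps H) (hx : IsFiniteRankOp (x : H →L[ℂ] H)) : TR (x * D x) = 0 := by
  have h1 : IsFiniteRankOp ((x * D x : compactOps H) : H →L[ℂ] H) := frk_mul_left hx
  have h2 : IsFiniteRankOp ((D x * x : compactOps H) : H →L[ℂ] H) := frk_mul_right hx
  have hc : TR (D x * x) = TR (x * D x) := TR_mul_comm _ _ hx
  have hxx : IsFiniteRankOp ((x * x : compactOps H) : H →L[ℂ] H) := frk_mul_left hx
  have h0 : TR (D (x * x)) = 0 := (D_fin D hD (x * x) hxx).2
  rw [hD x x, TR_add _ _ h2 h1, hc] at h0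
  exact add_self_eq_zero.mp h0

lemma TR_x_Δx (Δ : compactOps H → compactOps H) (hΔ : @IsWeak2LocalDerivation _ _ (SubmoduleClass.toNormedSpace _) Δ)
    (x : compactOps H) (hx : IsFiniteRankOp (x : H →L[ℂ] H)) : TR (x * Δ x) = 0 := by
  obtain ⟨φ, hφ⟩ := exists_phi x hx
  obtain ⟨D, hDer, h1, -⟩ := hΔ x x φ
  calc TR (x * Δ x) = φ (Δ x) := (hφ _).symm
    _ = φ (D x) := h1
    _ = TR (x * D x) := hφ _
    _ = 0 := TR_x_Dx D hDer x hx

lemma IDENT (Δ : compactOps H → compactOps H) (hΔ : @IsWeak2LocalDerivation _ _ (SubmoduleClass.toNormedSpace _) Δ)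
    (x c : compactOps H) (hx : IsFiniteRankOp (x : H →L[ℂ] H))
    (hc : IsFiniteRankOp (c : H →L[ℂ] H)) : TR (c * Δ x) + TR (x * Δ c) = 0 := by
  obtain ⟨φc, hφc⟩ := exists_phi c hc
  obtain ⟨φx, hφx⟩ := exists_phi x hx
  obtain ⟨D, hDer, h1, h2⟩ := hΔ x c (φc + φx)
  have e1 : TR (c * Δ x) + TR (x * Δ x) = TR (c * D x) + TR (x * D x) := by
    simpa [ContinuousLinearMap.add_apply, hφc, hφx] using h1
  have e2 : TR (c * Δ c) + TR (x * Δ c) = TR (c * D c) + TR (x * D c) := by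
    simpa [ContinuousLinearMap.add_apply, hφc, hφx] using h2
  rw [TR_x_Δx Δ hΔ x hx, TR_x_Dx D hDer x hx] at e1
  rw [TR_x_Δx Δ hΔ c hc, TR_x_Dx D hDer c hc] at e2
  have key : TR (c * D x) + TR (x * D c) = 0 := by
    have hcm : TR (c * D x) = TR (D x * c) := (TR_mul_comm (D x) c hc).symm
    have hfin1 : IsFiniteRankOp ((D x * c : compactOps H) : H →L[ℂ] H) := frk_mul_right hc
    have hfin2 : IsFiniteRankOp ((x * D c : compactOps H) : H →L[ℂ] H) := frk_mul_left hx
    have hxc : IsFiniteRankOp ((x * c : compactOps H) : H →L[ℂ] H) := frk_mul_left hx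
    have h0 : TR (D (x * c)) = 0 := (D_fin D hDer (x * c) hxc).2
    rw [hDer x c, TR_add _ _ hfin1 hfin2] at h0
    rw [hcm]; linear_combination h0
  linear_combination e1 + e2 + key

end Main

end W2LAux

/-- Every weak-2-local derivation `Δ` on `K(H)` is additive on finite-rank operators:
`Δ(a + b) = Δ(a) + Δ(b)` for all finite-rank `a, b`. -/
theorem weak2local_additive_on_finite_ranks
    (Δ : compactOps H → compactOps H) (hΔ : @IsWeak2LocalDerivation _ _ (SubmoduleClass.toNormedSpace _) Δ)
    (a b : compactOps H) (ha : IsFiniteRankOp (a : H →L[ℂ] H))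
    (hb : IsFiniteRankOp (b : H →L[ℂ] H)) :
    Δ (a + b) = Δ a + Δ b := by
  have hab : IsFiniteRankOp ((a + b : compactOps H) : H →L[ℂ] H) := frk_add ha hb
  have key : ∀ ξ η : H, ⟪η, ((Δ (a + b) : compactOps H) : H →L[ℂ] H) ξ⟫
      = ⟪η, ((Δ a : compactOps H) : H →L[ℂ] H) ξ⟫
        + ⟪η, ((Δ b : compactOps H) : H →L[ℂ] H) ξ⟫ := by
    intro ξ η
    set c := rkK ξ η with hcdef
    have hc : IsFiniteRankOp ((c : compactOps H) : H →L[ℂ] H) := frk_rk ξ η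
    have E1 := IDENT Δ hΔ (a + b) c hab hc
    have E2 := IDENT Δ hΔ a c ha hc
    have E3 := IDENT Δ hΔ b c hb hc
    have hTRd : TR ((a + b) * Δ c) = TR (a * Δ c) + TR (b * Δ c) := by
      rw [add_mul]; exact TR_add _ _ (frk_mul_left ha) (frk_mul_left hb)
    have B : ∀ z : compactOps H, TR (c * z) = ⟪η, (z : H →L[ℂ] H) ξ⟫ :=
      fun z => TR_rkK_mul ξ η z
    rw [← B (Δ (a + b)), ← B (Δ a), ← B (Δ b)]
    linear_combination E1 - E2 - E3 - hTRd
  apply Subtype.ext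
  apply ContinuousLinearMap.ext
  intro ξ
  apply ext_inner_left ℂ
  intro η
  have h := key ξ η
  have hr : ((Δ a + Δ b : compactOps H) : H →L[ℂ] H) ξ
      = ((Δ a : compactOps H) : H →L[ℂ] H) ξ + ((Δ b : compactOps H) : H →L[ℂ] H) ξ := rfl
  rw [hr, inner_add_right]
  exact h
end

section
/- Let H be a complex Hilbert space, Δ : K(H) → K(H) a weak-2-local derivation, and (p_n) a sequence of mutually orthogonal rank-one (minimal) projections. Let B denote the commutative C*-subalgebra of K(H) generated by the p_n. Then Δ(a + b) = Δ(a) + Δ(b) for all a, b ∈ B. -/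
variable (H : Type*) [NormedAddCommGroup H] [InnerProductSpace ℂ H] [CompleteSpace H]

noncomputable instance : NormedSpace ℂ (compactOps H) :=
  SubmoduleClass.toNormedSpace (R := ℂ) (compactOps H)

open scoped InnerProductSpace

set_option maxHeartbeats 1600000
set_option synthInstance.maxHeartbeats 400000

/-- Auxiliary scalar lemma: the core algebraic argument for weak-2-local additivity. -/
lemma weak2_core_aux {S A B μ ν : ℂ}
    (h1 : ∃ c, A = c * μ ∧ B = c * ν)
    (h2 : ∃ c, S = c * (μ + ν) ∧ A = c * μ)
    (h3 : ∃ c, S = c * (μ + ν) ∧ B = c * ν) : S = A + B := by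
  obtain ⟨c, hA, hB⟩ := h1
  obtain ⟨c', hS', hA'⟩ := h2
  obtain ⟨c'', hS'', hB''⟩ := h3
  by_cases hμ : μ = 0
  · by_cases hν : ν = 0
    · simp [hμ, hν] at hS' hA hB; simp [hS', hA, hB]
    · have hc : c'' = c := mul_right_cancel₀ hν (hB''.symm.trans hB)
      subst hc
      rw [hS'', hA, hB, hμ]; ring
  · have hc : c' = c := mul_right_cancel₀ hμ (hA'.symm.trans hA)
    subst hc
    rw [hS', hA, hB]; ring

variable {H}

/-- The vector functional `x ↦ ⟪ξ, x η⟫` on the compact operators. -/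
noncomputable def compactVecFunctional (ξ η : H) : compactOps H →L[ℂ] ℂ :=
  LinearMap.mkContinuous
    { toFun := fun x => ⟪ξ, (x : H →L[ℂ] H) η⟫_ℂ
      map_add' := fun x y => by simp [inner_add_right]
      map_smul' := fun c x => by simp [inner_smul_right] }
    (‖ξ‖ * ‖η‖)
    (by
      intro x
      calc ‖⟪ξ, (x : H →L[ℂ] H) η⟫_ℂ‖ ≤ ‖ξ‖ * ‖(x : H →L[ℂ] H) η‖ := norm_inner_le_norm _ _
        _ ≤ ‖ξ‖ * (‖(x : H →L[ℂ] H)‖ * ‖η‖) := by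
            gcongr; exact (x : H →L[ℂ] H).le_opNorm η
        _ = ‖ξ‖ * ‖η‖ * ‖x‖ := by rw [show ‖(x : H →L[ℂ] H)‖ = ‖x‖ from rfl]; ring)

@[simp] lemma compactVecFunctional_apply (ξ η : H) (x : compactOps H) :
    compactVecFunctional ξ η x = ⟪ξ, (x : H →L[ℂ] H) η⟫_ℂ := rfl

/-- Let `Δ` be a weak-2-local derivation on `K(H)` and let `(p_n)` be a sequence of
mutually orthogonal rank-one (minimal) projections.  If `B` is the commutative
C*-subalgebra of `K(H)` generated by the `p_n` (the closure of the algebra they generate),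
then `Δ(a + b) = Δ(a) + Δ(b)` for all `a, b ∈ B`. -/
theorem weak2local_additive_on_atomic_commutative_subalgebra
    (Δ : compactOps H → compactOps H) (hΔ : IsWeak2LocalDerivation Δ)
    (p : ℕ → compactOps H)
    (hproj : ∀ n, IsIdempotentElem ((p n : H →L[ℂ] H)) ∧
      IsSelfAdjoint ((p n : H →L[ℂ] H)))
    (hrank : ∀ n, Module.finrank ℂ (LinearMap.range ((p n : H →L[ℂ] H) : H →ₗ[ℂ] H)) = 1)
    (horth : ∀ m n, m ≠ n → p m * p n = 0)
    (a b : compactOps H)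
    (ha : a ∈ (NonUnitalAlgebra.adjoin ℂ (Set.range p)).topologicalClosure)
    (hb : b ∈ (NonUnitalAlgebra.adjoin ℂ (Set.range p)).topologicalClosure) :
    Δ (a + b) = Δ a + Δ b := by
  classical
  -- basic operator facts
  have hsa : ∀ n (x y : H), ⟪(p n : H →L[ℂ] H) x, y⟫_ℂ = ⟪x, (p n : H →L[ℂ] H) y⟫_ℂ := by
    intro n x y
    have h := (hproj n).2
    rw [ContinuousLinearMap.isSelfAdjoint_iff'] at h
    conv_lhs => rw [← h]
    exact ContinuousLinearMap.adjoint_inner_left _ y x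
  have hidem : ∀ n, p n * p n = p n := fun n => Subtype.ext (hproj n).1
  have hPo : ∀ m n, m ≠ n → ∀ v : H, (p m : H →L[ℂ] H) ((p n : H →L[ℂ] H) v) = 0 := by
    intro m n h v
    have h1 : ((p m * p n : (compactOps H)) : H →L[ℂ] H) = 0 := by rw [horth m n h]; rfl
    have := congrFun (congrArg DFunLike.coe h1) v
    simpa [ContinuousLinearMap.mul_apply] using this
  have hPP : ∀ n (v : H), (p n : H →L[ℂ] H) ((p n : H →L[ℂ] H) v) = (p n : H →L[ℂ] H) v := by
    intro n v
    have := congrFun (congrArg DFunLike.coe (hproj n).1) v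
    simpa [ContinuousLinearMap.mul_apply] using this
  -- unit vectors in the ranges
  have huex : ∀ n, ∃ v : H, (p n : H →L[ℂ] H) v = v ∧ ⟪v, v⟫_ℂ = 1 := by
    intro n
    have : Nontrivial (LinearMap.range ((p n : H →L[ℂ] H) : H →ₗ[ℂ] H)) :=
      Module.nontrivial_of_finrank_eq_succ (hrank n)
    obtain ⟨⟨v, hv⟩, hv0⟩ := exists_ne (0 : LinearMap.range ((p n : H →L[ℂ] H) : H →ₗ[ℂ] H))
    obtain ⟨w, hw⟩ := LinearMap.mem_range.mp hv
    have hv0' : v ≠ 0 := by simpa [Subtype.ext_iff] using hv0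
    have hPv : (p n : H →L[ℂ] H) v = v := by
      rw [← hw]; simpa using hPP n w
    refine ⟨(‖v‖ : ℂ)⁻¹ • v, by rw [map_smul, hPv], ?_⟩
    have hn : (‖v‖ : ℂ) ≠ 0 := by exact_mod_cast norm_ne_zero_iff.mpr hv0'
    rw [inner_smul_left, inner_smul_right, inner_self_eq_norm_sq_to_K]
    rw [map_inv₀, Complex.conj_ofReal]
    field_simp; rfl
  choose u hu1 hu2 using huex
  have hlam : ∀ n k, ⟪u n, (p k : H →L[ℂ] H) (u n)⟫_ℂ = if k = n then 1 else 0 := by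
    intro n k
    by_cases h : k = n
    · subst h; rw [hu1, hu2]; simp
    · rw [if_neg h]
      conv_lhs => rw [← hu1 n]
      rw [hPo k n h]
      simp
  -- membership in the closure of the span
  set sp : Submodule ℂ (compactOps H) := Submodule.span ℂ (Set.range p) with hsp
  have mul_sp : ∀ x ∈ sp, ∀ y ∈ sp, x * y ∈ sp := by
    intro x hx
    induction hx using Submodule.span_induction with
    | mem x hx =>
      intro y hy
      induction hy using Submodule.span_induction with
      | mem y hy =>
        obtain ⟨m, rfl⟩ := hx; obtain ⟨n, rfl⟩ := hy
        by_cases h : m = n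
        · subst h; rw [hidem m]; exact Submodule.subset_span ⟨m, rfl⟩
        · rw [horth m n h]; exact sp.zero_mem
      | zero => rw [mul_zero]; exact sp.zero_mem
      | add y z _ _ ihy ihz => rw [mul_add]; exact sp.add_mem ihy ihz
      | smul c y _ ihy => rw [mul_smul_comm]; exact sp.smul_mem c ihy
    | zero => intro y _; rw [zero_mul]; exact sp.zero_mem
    | add x z _ _ ihx ihz => intro y hy; rw [add_mul]; exact sp.add_mem (ihx y hy) (ihz y hy)
    | smul c x _ ihx => intro y hy; rw [smul_mul_assoc]; exact sp.smul_mem c (ihx y hy)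
  have hadj : ∀ x ∈ NonUnitalAlgebra.adjoin ℂ (Set.range p), x ∈ sp := by
    intro x hx
    induction hx using NonUnitalAlgebra.adjoin_induction with
    | mem x hx => exact Submodule.subset_span hx
    | add x y _ _ ihx ihy => exact sp.add_mem ihx ihy
    | zero => exact sp.zero_mem
    | mul x y _ _ ihx ihy => exact mul_sp x ihx y ihy
    | smul c x _ ihx => exact sp.smul_mem c ihx
  have hsub : a ∈ sp.topologicalClosure ∧ b ∈ sp.topologicalClosure := by
    constructor <;>
    · first
      | exact closure_mono (fun x hx => hadj x hx) ha
      | exact closure_mono (fun x hx => hadj x hx) hb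
  have hBa : a ∈ sp.topologicalClosure := hsub.1
  have hBb : b ∈ sp.topologicalClosure := hsub.2
  have hBab : a + b ∈ sp.topologicalClosure := add_mem hBa hBb
  -- the region lemma: identities verified on generators pass to the closed span
  have region : ∀ (D : (compactOps H) →L[ℂ] (compactOps H)) (ℓ : (compactOps H) →L[ℂ] ℂ) (ξ η : H) (c : ℂ),
      (∀ k, ⟪ξ, ((D (p k) : (compactOps H)) : H →L[ℂ] H) η⟫_ℂ = c * ℓ (p k)) →
      ∀ x ∈ sp.topologicalClosure, ⟪ξ, ((D x : (compactOps H)) : H →L[ℂ] H) η⟫_ℂ = c * ℓ x := by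
    intro D ℓ ξ η c hgen x hx
    set g : (compactOps H) →L[ℂ] ℂ := ((compactVecFunctional ξ η).comp D) - c • ℓ with hg
    have hker : sp.topologicalClosure ≤ LinearMap.ker (g : (compactOps H) →ₗ[ℂ] ℂ) := by
      apply Submodule.topologicalClosure_minimal
      · rw [hsp, Submodule.span_le]
        rintro _ ⟨k, rfl⟩
        simp only [SetLike.mem_coe, LinearMap.mem_ker, hg, ContinuousLinearMap.coe_coe, ContinuousLinearMap.coe_sub',
          Pi.sub_apply, ContinuousLinearMap.coe_comp', Function.comp_apply,
          ContinuousLinearMap.coe_smul', Pi.smul_apply, smul_eq_mul,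
          compactVecFunctional_apply]
        rw [sub_eq_zero]
        exact hgen k
      · exact ContinuousLinearMap.isClosed_ker g
    have h0 := hker hx
    rw [LinearMap.mem_ker, hg] at h0
    simp only [ContinuousLinearMap.coe_coe, ContinuousLinearMap.coe_sub', Pi.sub_apply, ContinuousLinearMap.coe_comp',
      Function.comp_apply, ContinuousLinearMap.coe_smul', Pi.smul_apply, smul_eq_mul,
      compactVecFunctional_apply] at h0
    rw [sub_eq_zero] at h0
    exact h0
  -- generator facts for any derivation D
  have leib : ∀ (D : (compactOps H) →L[ℂ] (compactOps H)), (∀ x y : (compactOps H), D (x * y) = D x * y + x * D y) →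
      ∀ k (v : H), ((D (p k) : (compactOps H)) : H →L[ℂ] H) v
        = ((D (p k) : (compactOps H)) : H →L[ℂ] H) ((p k : H →L[ℂ] H) v)
          + (p k : H →L[ℂ] H) (((D (p k) : (compactOps H)) : H →L[ℂ] H) v) := by
    intro D hD k v
    have h1 : D (p k) = D (p k) * p k + p k * D (p k) := by
      conv_lhs => rw [← hidem k, hD]
    have := congrFun (congrArg DFunLike.coe (congrArg Subtype.val h1)) v
    simpa [ContinuousLinearMap.mul_apply] using this
  have gA : ∀ (D : (compactOps H) →L[ℂ] (compactOps H)), (∀ x y : (compactOps H), D (x * y) = D x * y + x * D y) →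
      ∀ k (v : H), (p k : H →L[ℂ] H) v = 0 →
      ((D (p k) : (compactOps H)) : H →L[ℂ] H) v = (p k : H →L[ℂ] H) (((D (p k) : (compactOps H)) : H →L[ℂ] H) v) := by
    intro D hD k v hv
    have := leib D hD k v
    rw [hv, map_zero, zero_add] at this
    exact this
  have gC : ∀ (D : (compactOps H) →L[ℂ] (compactOps H)), (∀ x y : (compactOps H), D (x * y) = D x * y + x * D y) →
      ∀ k (v : H), (p k : H →L[ℂ] H) v = v →
      (p k : H →L[ℂ] H) (((D (p k) : (compactOps H)) : H →L[ℂ] H) v) = 0 := by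
    intro D hD k v hv
    have := leib D hD k v
    rw [hv] at this
    have := left_eq_add.mp this
    exact this
  have gB : ∀ (D : (compactOps H) →L[ℂ] (compactOps H)), (∀ x y : (compactOps H), D (x * y) = D x * y + x * D y) →
      ∀ k n, k ≠ n → ∀ (v : H), (p n : H →L[ℂ] H) v = v →
      ((D (p k) : (compactOps H)) : H →L[ℂ] H) v = -((p k : H →L[ℂ] H) (((D (p n) : (compactOps H)) : H →L[ℂ] H) v)) := by
    intro D hD k n hkn v hv
    have h1 : D (p k) * p n + p k * D (p n) = 0 := by
      rw [← hD, horth k n hkn]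
      exact ContinuousLinearMap.map_zero D
    have h2 := congrFun (congrArg DFunLike.coe (congrArg Subtype.val h1)) v
    have h3 : ((D (p k) : (compactOps H)) : H →L[ℂ] H) ((p n : H →L[ℂ] H) v)
        + (p k : H →L[ℂ] H) (((D (p n) : (compactOps H)) : H →L[ℂ] H) v) = 0 := by
      simpa [ContinuousLinearMap.mul_apply] using h2
    rw [hv] at h3
    exact eq_neg_of_add_eq_zero_left h3
  -- matrix-element facts for derivations
  have hdiag : ∀ (D : (compactOps H) →L[ℂ] (compactOps H)),
      (∀ x y : (compactOps H), D (x * y) = D x * y + x * D y) →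
      ∀ k (ξ η : H), (p k : H →L[ℂ] H) ξ = ξ → (p k : H →L[ℂ] H) η = η →
      ⟪ξ, ((D (p k) : (compactOps H)) : H →L[ℂ] H) η⟫_ℂ = 0 := by
    intro D hD k ξ η hξ hη
    conv_lhs => rw [← hξ]
    rw [hsa k ξ _, gC D hD k η hη, inner_zero_right]
  have hoff : ∀ (D : (compactOps H) →L[ℂ] (compactOps H)),
      (∀ x y : (compactOps H), D (x * y) = D x * y + x * D y) →
      ∀ k n, k ≠ n → ∀ (ξ η : H), (p k : H →L[ℂ] H) ξ = 0 → (p n : H →L[ℂ] H) η = η →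
      ⟪ξ, ((D (p k) : (compactOps H)) : H →L[ℂ] H) η⟫_ℂ = 0 := by
    intro D hD k n hkn ξ η hξ hη
    rw [gB D hD k n hkn η hη, inner_neg_right, ← hsa k ξ _, hξ, inner_zero_left, neg_zero]
  have hoffm : ∀ (D : (compactOps H) →L[ℂ] (compactOps H)),
      (∀ x y : (compactOps H), D (x * y) = D x * y + x * D y) →
      ∀ m n, m ≠ n → ∀ (ξ η : H), (p m : H →L[ℂ] H) ξ = ξ → (p n : H →L[ℂ] H) η = η →
      ⟪ξ, ((D (p m) : (compactOps H)) : H →L[ℂ] H) η⟫_ℂ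
        = -⟪ξ, ((D (p n) : (compactOps H)) : H →L[ℂ] H) η⟫_ℂ := by
    intro D hD m n hmn ξ η hξ hη
    rw [gB D hD m n hmn η hη, inner_neg_right, ← hsa m ξ _, hξ]
  have hker2 : ∀ (D : (compactOps H) →L[ℂ] (compactOps H)),
      (∀ x y : (compactOps H), D (x * y) = D x * y + x * D y) →
      ∀ k (ξ η : H), (p k : H →L[ℂ] H) ξ = 0 → (p k : H →L[ℂ] H) η = 0 →
      ⟪ξ, ((D (p k) : (compactOps H)) : H →L[ℂ] H) η⟫_ℂ = 0 := by
    intro D hD k ξ η hξ hη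
    rw [gA D hD k η hη, ← hsa k ξ _, hξ, inner_zero_left]
  -- the master additivity principle for matrix elements
  have master : ∀ (ξ η : H) (ℓ : (compactOps H) →L[ℂ] ℂ),
      (∀ D : (compactOps H) →L[ℂ] (compactOps H),
        (∀ x y : (compactOps H), D (x * y) = D x * y + x * D y) →
        ∃ c : ℂ, ∀ k, ⟪ξ, ((D (p k) : (compactOps H)) : H →L[ℂ] H) η⟫_ℂ = c * ℓ (p k)) →
      ⟪ξ, ((Δ (a + b) : (compactOps H)) : H →L[ℂ] H) η⟫_ℂ
        = ⟪ξ, ((Δ a : (compactOps H)) : H →L[ℂ] H) η⟫_ℂ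
          + ⟪ξ, ((Δ b : (compactOps H)) : H →L[ℂ] H) η⟫_ℂ := by
    intro ξ η ℓ hcond
    obtain ⟨D1, hD1, e1a, e1b⟩ := hΔ a b (compactVecFunctional ξ η)
    obtain ⟨D2, hD2, e2s, e2a⟩ := hΔ (a + b) a (compactVecFunctional ξ η)
    obtain ⟨D3, hD3, e3s, e3b⟩ := hΔ (a + b) b (compactVecFunctional ξ η)
    obtain ⟨c1, h1⟩ := hcond D1 hD1
    obtain ⟨c2, h2⟩ := hcond D2 hD2
    obtain ⟨c3, h3⟩ := hcond D3 hD3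
    have hab : ℓ (a + b) = ℓ a + ℓ b := map_add ℓ a b
    refine weak2_core_aux (μ := ℓ a) (ν := ℓ b) ⟨c1, ?_, ?_⟩ ⟨c2, ?_, ?_⟩ ⟨c3, ?_, ?_⟩
    · exact e1a.trans (region D1 ℓ ξ η c1 h1 a hBa)
    · exact e1b.trans (region D1 ℓ ξ η c1 h1 b hBb)
    · exact e2s.trans (((region D2 ℓ ξ η c2 h2 (a + b) hBab).trans (by rw [hab])))
    · exact e2a.trans (region D2 ℓ ξ η c2 h2 a hBa)
    · exact e3s.trans (((region D3 ℓ ξ η c3 h3 (a + b) hBab).trans (by rw [hab])))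
    · exact e3b.trans (region D3 ℓ ξ η c3 h3 b hBb)
  -- the defect operator
  set zop : H →L[ℂ] H :=
      ((Δ (a + b) : (compactOps H)) : H →L[ℂ] H)
        - ((Δ a : (compactOps H)) : H →L[ℂ] H) - ((Δ b : (compactOps H)) : H →L[ℂ] H)
    with hzop
  have hzap : ∀ (ξ η : H),
      ⟪ξ, ((Δ (a + b) : (compactOps H)) : H →L[ℂ] H) η⟫_ℂ
        = ⟪ξ, ((Δ a : (compactOps H)) : H →L[ℂ] H) η⟫_ℂ
          + ⟪ξ, ((Δ b : (compactOps H)) : H →L[ℂ] H) η⟫_ℂ →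
      ⟪ξ, zop η⟫_ℂ = 0 := by
    intro ξ η h
    rw [hzop]
    simp only [ContinuousLinearMap.sub_apply, inner_sub_right]
    rw [h]; ring
  -- the four regions
  have Z1 : ∀ m n (ξ η : H), (p m : H →L[ℂ] H) ξ = ξ → (p n : H →L[ℂ] H) η = η →
      ⟪ξ, zop η⟫_ℂ = 0 := by
    intro m n ξ η hξ hη
    apply hzap
    by_cases hmn : m = n
    · subst hmn
      apply master ξ η 0
      intro D hD
      refine ⟨0, fun k => ?_⟩
      rw [zero_mul]
      by_cases hk : k = m
      · subst hk; exact hdiag D hD k ξ η hξ hη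
      · exact hoff D hD k m hk ξ η (by rw [← hξ]; exact hPo k m hk ξ) hη
    · apply master ξ η (compactVecFunctional (u n) (u n) - compactVecFunctional (u m) (u m))
      intro D hD
      refine ⟨⟪ξ, ((D (p n) : (compactOps H)) : H →L[ℂ] H) η⟫_ℂ, fun k => ?_⟩
      have hl : (compactVecFunctional (u n) (u n) - compactVecFunctional (u m) (u m)) (p k)
          = (if k = n then 1 else 0) - (if k = m then 1 else 0) := by
        rw [ContinuousLinearMap.sub_apply, compactVecFunctional_apply, compactVecFunctional_apply,
          hlam n k, hlam m k]
      rw [hl]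
      by_cases hkn : k = n
      · subst hkn
        rw [if_pos rfl, if_neg (fun h : k = m => hmn (h ▸ rfl))]
        ring
      · by_cases hkm : k = m
        · subst hkm
          rw [if_neg hkn, if_pos rfl]
          rw [hoffm D hD k n hkn ξ η hξ hη]
          ring
        · rw [if_neg hkn, if_neg hkm]
          rw [hoff D hD k n hkn ξ η (by rw [← hξ]; exact hPo k m hkm ξ) hη]
          ring
  have Z2 : ∀ m (ξ η : H), (p m : H →L[ℂ] H) ξ = ξ → (∀ k, (p k : H →L[ℂ] H) η = 0) →
      ⟪ξ, zop η⟫_ℂ = 0 := by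
    intro m ξ η hξ hη
    apply hzap
    apply master ξ η (compactVecFunctional (u m) (u m))
    intro D hD
    refine ⟨⟪ξ, ((D (p m) : (compactOps H)) : H →L[ℂ] H) η⟫_ℂ, fun k => ?_⟩
    rw [compactVecFunctional_apply, hlam m k]
    by_cases hk : k = m
    · subst hk; rw [if_pos rfl, mul_one]
    · rw [if_neg hk, mul_zero]
      exact hker2 D hD k ξ η (by rw [← hξ]; exact hPo k m hk ξ) (hη k)
  have Z3 : ∀ n (ξ η : H), (∀ k, (p k : H →L[ℂ] H) ξ = 0) → (p n : H →L[ℂ] H) η = η →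
      ⟪ξ, zop η⟫_ℂ = 0 := by
    intro n ξ η hξ hη
    apply hzap
    apply master ξ η (compactVecFunctional (u n) (u n))
    intro D hD
    refine ⟨⟪ξ, ((D (p n) : (compactOps H)) : H →L[ℂ] H) η⟫_ℂ, fun k => ?_⟩
    rw [compactVecFunctional_apply, hlam n k]
    by_cases hk : k = n
    · subst hk; rw [if_pos rfl, mul_one]
    · rw [if_neg hk, mul_zero]
      exact hoff D hD k n hk ξ η (hξ k) hη
  have Z4 : ∀ (ξ η : H), (∀ k, (p k : H →L[ℂ] H) ξ = 0) → (∀ k, (p k : H →L[ℂ] H) η = 0) →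
      ⟪ξ, zop η⟫_ℂ = 0 := by
    intro ξ η hξ hη
    apply hzap
    apply master ξ η 0
    intro D hD
    refine ⟨0, fun k => ?_⟩
    rw [zero_mul]
    exact hker2 D hD k ξ η (hξ k) (hη k)
  -- assembly: zop vanishes on the ranges of the projections
  have step1 : ∀ n (η : H), zop ((p n : H →L[ℂ] H) η) = 0 := by
    intro n η
    set z := zop ((p n : H →L[ℂ] H) η) with hz
    have hPz : ∀ m, (p m : H →L[ℂ] H) z = 0 := by
      intro m
      have h2 : ⟪(p m : H →L[ℂ] H) z, z⟫_ℂ = 0 := Z1 m n _ _ (hPP m z) (hPP n η)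
      have h3 : ⟪(p m : H →L[ℂ] H) z, (p m : H →L[ℂ] H) z⟫_ℂ = 0 := by
        rw [hsa m z _, hPP m z, ← inner_conj_symm, h2, map_zero]
      exact inner_self_eq_zero.mp h3
    have h4 : ⟪z, z⟫_ℂ = 0 := Z3 n z _ hPz (hPP n η)
    exact inner_self_eq_zero.mp h4
  -- zop vanishes on the joint kernel
  have step2 : ∀ (η : H), (∀ k, (p k : H →L[ℂ] H) η = 0) → zop η = 0 := by
    intro η hη
    set z := zop η with hz
    have hPz : ∀ m, (p m : H →L[ℂ] H) z = 0 := by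
      intro m
      have h2 : ⟪(p m : H →L[ℂ] H) z, z⟫_ℂ = 0 := Z2 m _ _ (hPP m z) hη
      have h3 : ⟪(p m : H →L[ℂ] H) z, (p m : H →L[ℂ] H) z⟫_ℂ = 0 := by
        rw [hsa m z _, hPP m z, ← inner_conj_symm, h2, map_zero]
      exact inner_self_eq_zero.mp h3
    have h4 : ⟪z, z⟫_ℂ = 0 := Z4 z η hPz hη
    exact inner_self_eq_zero.mp h4
  -- the adjoint trick
  set w : H →L[ℂ] H := ContinuousLinearMap.adjoint zop with hw
  have hKw : ∀ (η : H) k, (p k : H →L[ℂ] H) (w η) = 0 := by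
    intro η k
    have h1 : ∀ x : H, ⟪x, (p k : H →L[ℂ] H) (w η)⟫_ℂ = 0 := by
      intro x
      rw [← hsa k x (w η), hw, ContinuousLinearMap.adjoint_inner_right, step1 k x,
        inner_zero_left]
    have := h1 ((p k : H →L[ℂ] H) (w η))
    rwa [inner_self_eq_zero] at this
  have hw0 : ∀ η : H, w η = 0 := by
    intro η
    have h2 : ⟪w η, w η⟫_ℂ = 0 := by
      rw [hw, ContinuousLinearMap.adjoint_inner_left, step2 _ (hKw η), inner_zero_right]
    exact inner_self_eq_zero.mp h2
  have hzero : ∀ η : H, zop η = 0 := by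
    intro η
    have h3 : ⟪zop η, zop η⟫_ℂ = 0 := by
      rw [show (⟪zop η, zop η⟫_ℂ) = ⟪η, w (zop η)⟫_ℂ from
        (ContinuousLinearMap.adjoint_inner_right zop η (zop η)).symm, hw0, inner_zero_right]
    exact inner_self_eq_zero.mp h3
  -- conclusion
  have hval : ((Δ (a + b) : (compactOps H)) : H →L[ℂ] H)
      = ((Δ a : (compactOps H)) : H →L[ℂ] H) + ((Δ b : (compactOps H)) : H →L[ℂ] H) := by
    have hz0 : zop = 0 := ContinuousLinearMap.ext fun η => by rw [hzero η]; rfl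
    rw [hzop, sub_sub, sub_eq_zero] at hz0
    exact hz0
  exact Subtype.ext hval
end

section
/- Let H be a separable infinite-dimensional complex Hilbert space and Δ : B(H) → B(H) a (not necessarily linear nor continuous) weak-2-local derivation. Then the restriction of Δ to the self-adjoint part B(H)_sa is additive: Δ(a + b) = Δ(a) + Δ(b) for all self-adjoint a, b ∈ B(H). -/
section Weak2LocalAux

open scoped ComplexInnerProductSpace
open ComplexConjugate

variable {H : Type*} [NormedAddCommGroup H] [InnerProductSpace ℂ H] [CompleteSpace H]

/-- The symmetric rank `≤ 2` operator `w ↦ ⟪p,w⟫ • q + ⟪q,w⟫ • p`. -/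
noncomputable def symOp (p q : H) : H →L[ℂ] H :=
  ((innerSL ℂ p).smulRight q) + ((innerSL ℂ q).smulRight p)

lemma symOp_apply (p q w : H) : symOp p q w = ⟪p, w⟫ • q + ⟪q, w⟫ • p := by
  simp [symOp]

lemma symOp_sa (p q : H) : IsSelfAdjoint (symOp p q) := by
  rw [ContinuousLinearMap.isSelfAdjoint_iff_isSymmetric]
  intro x y
  simp only [ContinuousLinearMap.coe_coe, symOp_apply, inner_add_left, inner_add_right,
    inner_smul_left, inner_smul_right, inner_conj_symm]
  ring

lemma symOp_eval (e w : H) (he : ⟪e, e⟫ = 1) (hw : ⟪w, e⟫ = 0) : symOp e w e = w := by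
  rw [symOp_apply, he, hw]
  simp

lemma symOp_eval0 (e w z : H) (h1 : ⟪e, z⟫ = 0) (h2 : ⟪w, z⟫ = 0) : symOp e w z = 0 := by
  simp [symOp_apply, h1, h2]

variable (Δ : (H →L[ℂ] H) → (H →L[ℂ] H))

/-- The key transfer lemma: if `x - y` is self-adjoint and has `α` and `β` as eigenvectors
with the same real eigenvalue, then the `(β, α)` matrix entries of `Δ x` and `Δ y` agree.
This uses that every bounded derivation of `B(H)` is spatial. -/
lemma w2l_key (hΔ : IsWeak2LocalDerivation Δ) (ξ : H) (hξ : ⟪ξ, ξ⟫ = 1)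
    (x y : H →L[ℂ] H) (hxy : IsSelfAdjoint (x - y)) (α β : H) (lam : ℂ)
    (hlam : conj lam = lam) (hα : x α - y α = lam • α) (hβ : x β - y β = lam • β) :
    ⟪β, Δ x α⟫ = ⟪β, Δ y α⟫ := by
  obtain ⟨D, hLeib, h1, h2⟩ :=
    hΔ x y ((innerSL ℂ β).comp (ContinuousLinearMap.apply ℂ H α))
  simp only [ContinuousLinearMap.comp_apply, ContinuousLinearMap.apply_apply,
    innerSL_apply_apply] at h1 h2
  rw [h1, h2]
  -- rank-one operators `R ζ = |ζ⟩⟨ξ|`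
  have hDpt : ∀ (w : H →L[ℂ] H) (ζ : H),
      D w ζ = D ((innerSL ℂ ξ).smulRight (w ζ)) ξ - w (D ((innerSL ℂ ξ).smulRight ζ) ξ) := by
    intro w ζ
    have hmul : w * ((innerSL ℂ ξ).smulRight ζ) = (innerSL ℂ ξ).smulRight (w ζ) := by
      ext v
      simp [ContinuousLinearMap.mul_apply, ContinuousLinearMap.smulRight_apply, map_smul]
    have h := hLeib w ((innerSL ℂ ξ).smulRight ζ)
    rw [hmul] at h
    have h' := congrArg (fun M : H →L[ℂ] H => M ξ) h
    simp only [ContinuousLinearMap.add_apply, ContinuousLinearMap.mul_apply] at h'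
    have hRξ : ((innerSL ℂ ξ).smulRight ζ) ξ = ζ := by
      rw [ContinuousLinearMap.smulRight_apply, innerSL_apply_apply, hξ, one_smul]
    rw [hRξ] at h'
    -- h' : D ((innerSL ℂ ξ).smulRight (w ζ)) ξ = D w ζ + w (D ((innerSL ℂ ξ).smulRight ζ) ξ)
    rw [h']
    abel
  have hsub : D x α - D y α = D (x - y) α := by
    rw [map_sub, ContinuousLinearMap.sub_apply]
  have hca : (x - y) α = lam • α := by rw [ContinuousLinearMap.sub_apply]; exact hα
  have hcb : (x - y) β = lam • β := by rw [ContinuousLinearMap.sub_apply]; exact hβ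
  have hsym := ContinuousLinearMap.isSelfAdjoint_iff_isSymmetric.mp hxy
  have hRs : (innerSL ℂ ξ).smulRight (lam • α) = lam • ((innerSL ℂ ξ).smulRight α) := by
    ext v
    simp only [ContinuousLinearMap.smulRight_apply, ContinuousLinearMap.smul_apply]
    rw [smul_comm]
  have hzero : ⟪β, D x α - D y α⟫ = 0 := by
    rw [hsub, hDpt (x - y) α, hca, hRs, map_smul, ContinuousLinearMap.smul_apply]
    rw [inner_sub_right, inner_smul_right]
    have hflip : ⟪β, (x - y) (D ((innerSL ℂ ξ).smulRight α) ξ)⟫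
        = ⟪(x - y) β, D ((innerSL ℂ ξ).smulRight α) ξ⟫ := by
      exact (hsym β (D ((innerSL ℂ ξ).smulRight α) ξ)).symm
    rw [hflip, hcb, inner_smul_left, hlam]
    ring
  have h3 : ⟪β, D x α⟫ - ⟪β, D y α⟫ = 0 := by rw [← inner_sub_right]; exact hzero
  exact sub_eq_zero.mp h3

/-- Entry-wise homogeneity of a weak-2-local derivation. -/
lemma w2l_smul (hΔ : IsWeak2LocalDerivation Δ) (x : H →L[ℂ] H) (s : ℂ) (α β : H) :
    ⟪β, Δ (s • x) α⟫ = s * ⟪β, Δ x α⟫ := by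
  obtain ⟨D, _, h1, h2⟩ :=
    hΔ x (s • x) ((innerSL ℂ β).comp (ContinuousLinearMap.apply ℂ H α))
  simp only [ContinuousLinearMap.comp_apply, ContinuousLinearMap.apply_apply,
    innerSL_apply_apply] at h1 h2
  rw [h2, map_smul, ContinuousLinearMap.smul_apply, inner_smul_right, h1]

lemma w2l_zero (hΔ : IsWeak2LocalDerivation Δ) (α β : H) : ⟪β, Δ 0 α⟫ = 0 := by
  have h := w2l_smul Δ hΔ 0 0 α β
  simpa using h

/-- Diagonal-entry version of the key lemma for eigenvalue `0`. -/
lemma w2l_key0 (hΔ : IsWeak2LocalDerivation Δ) (ξ : H) (hξ : ⟪ξ, ξ⟫ = 1)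
    (x y : H →L[ℂ] H) (hx : IsSelfAdjoint x) (hy : IsSelfAdjoint y) (e : H)
    (he : x e = y e) : ⟪e, Δ x e⟫ = ⟪e, Δ y e⟫ := by
  refine w2l_key Δ hΔ ξ hξ x y (hx.sub hy) e e 0 (by simp) ?_ ?_ <;>
    rw [he, sub_self, zero_smul]

/-- Diagonal-entry version of the key lemma for a real eigenvalue. -/
lemma w2l_keyR (hΔ : IsWeak2LocalDerivation Δ) (ξ : H) (hξ : ⟪ξ, ξ⟫ = 1)
    (x y : H →L[ℂ] H) (hx : IsSelfAdjoint x) (hy : IsSelfAdjoint y) (e : H) (lam : ℂ)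
    (hlam : conj lam = lam) (he : x e - y e = lam • e) :
    ⟪e, Δ x e⟫ = ⟪e, Δ y e⟫ :=
  w2l_key Δ hΔ ξ hξ x y (hx.sub hy) e e lam hlam he he

/-- The trace identity over the frame `{η+κ, η-κ, κ}`. -/
lemma trace3 (T : H →L[ℂ] H) (η κ : H) :
    ⟪η, T η⟫ = (⟪η + κ, T (η + κ)⟫ + ⟪η - κ, T (η - κ)⟫) / 2 - ⟪κ, T κ⟫ := by
  simp only [map_add, map_sub, inner_add_left, inner_add_right, inner_sub_left,
    inner_sub_right]
  ring

/-- In an infinite-dimensional Hilbert space we may find a unit vector orthogonal to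
any three given vectors. -/
lemma exists_unit_orth (hinf : ¬ FiniteDimensional ℂ H) (v1 v2 v3 : H) :
    ∃ κ : H, ⟪κ, κ⟫ = 1 ∧ ⟪v1, κ⟫ = 0 ∧ ⟪v2, κ⟫ = 0 ∧ ⟪v3, κ⟫ = 0 := by
  classical
  set S : Submodule ℂ H := Submodule.span ℂ ({v1, v2, v3} : Set H) with hS
  have hfd : FiniteDimensional ℂ S :=
    FiniteDimensional.span_of_finite ℂ (Set.toFinite _)
  have hne : Sᗮ ≠ ⊥ := by
    intro h0
    have htop : S = ⊤ := Submodule.orthogonal_eq_bot_iff.mp h0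
    apply hinf
    have : FiniteDimensional ℂ (⊤ : Submodule ℂ H) := htop ▸ hfd
    exact Submodule.topEquiv.finiteDimensional
  obtain ⟨w, hw_mem, hw0⟩ := Submodule.exists_mem_ne_zero_of_ne_bot hne
  refine ⟨(‖w‖⁻¹ : ℂ) • w, ?_, ?_, ?_, ?_⟩
  · have hn : ‖(‖w‖⁻¹ : ℂ) • w‖ = 1 := norm_smul_inv_norm hw0
    rw [inner_self_eq_norm_sq_to_K, hn]
    norm_num
  all_goals
    rw [inner_smul_right]
    have := (Submodule.mem_orthogonal S w).mp hw_mem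
    first
      | rw [this v1 (Submodule.subset_span (by simp)), mul_zero]
      | rw [this v2 (Submodule.subset_span (by simp)), mul_zero]
      | rw [this v3 (Submodule.subset_span (by simp)), mul_zero]

end Weak2LocalAux

open scoped ComplexInnerProductSpace
open ComplexConjugate

/-- Let `H` be a separable infinite-dimensional complex Hilbert space and
`Δ : B(H) → B(H)` a (non-necessarily linear nor continuous) weak-2-local derivation.
Then `Δ` is additive on the self-adjoint part of `B(H)`. -/
theorem weak2local_derivation_additive_on_selfadjoint_BH
    {H : Type*} [NormedAddCommGroup H] [InnerProductSpace ℂ H] [CompleteSpace H]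
    [TopologicalSpace.SeparableSpace H] (hinf : ¬ FiniteDimensional ℂ H)
    (Δ : (H →L[ℂ] H) → (H →L[ℂ] H)) (hΔ : IsWeak2LocalDerivation Δ)
    (a b : H →L[ℂ] H) (ha : IsSelfAdjoint a) (hb : IsSelfAdjoint b) :
    Δ (a + b) = Δ a + Δ b := by
  classical
  -- a unit vector for the key lemma
  obtain ⟨ξ, hξ, -, -, -⟩ := exists_unit_orth hinf (0 : H) 0 0
  -- the central claim: additivity of all diagonal matrix entries
  have main : ∀ η : H, ⟪η, η⟫ = 1 →
      ⟪η, Δ (a + b) η⟫ = ⟪η, Δ a η⟫ + ⟪η, Δ b η⟫ := by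
    intro η hη
    obtain ⟨κ, hκ, hηκ, haκ, hbκ⟩ := exists_unit_orth hinf η (a η) (b η)
    have hκη : ⟪κ, η⟫ = 0 := by rw [← inner_conj_symm κ η, hηκ, map_zero]
    have hκa : ⟪κ, a η⟫ = 0 := by rw [← inner_conj_symm κ (a η), haκ, map_zero]
    have hκb : ⟪κ, b η⟫ = 0 := by rw [← inner_conj_symm κ (b η), hbκ, map_zero]
    -- the fundamental scalar function
    set f : H → ℂ := fun w => ⟪κ, Δ (symOp κ w) κ⟫ with hf
    have hsym_a := ContinuousLinearMap.isSelfAdjoint_iff_isSymmetric.mp ha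
    have hsym_b := ContinuousLinearMap.isSelfAdjoint_iff_isSymmetric.mp hb
    set ru : ℂ := ⟪η, a η⟫ with hru_def
    set rv : ℂ := ⟪η, b η⟫ with hrv_def
    have hru : (starRingEnd ℂ) ru = ru := by
      rw [hru_def, inner_conj_symm]
      exact hsym_a η η
    have hrv : (starRingEnd ℂ) rv = rv := by
      rw [hrv_def, inner_conj_symm]
      exact hsym_b η η
    set u : H := a η - ru • η with hu_def
    set v : H := b η - rv • η with hv_def
    have hηu : ⟪η, u⟫ = 0 := by
      rw [hu_def, inner_sub_right, inner_smul_right, hη, mul_one, hru_def, sub_self]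
    have hηv : ⟪η, v⟫ = 0 := by
      rw [hv_def, inner_sub_right, inner_smul_right, hη, mul_one, hrv_def, sub_self]
    have hκu : ⟪κ, u⟫ = 0 := by
      rw [hu_def, inner_sub_right, inner_smul_right, hκa, hκη, mul_zero, sub_zero]
    have hκv : ⟪κ, v⟫ = 0 := by
      rw [hv_def, inner_sub_right, inner_smul_right, hκb, hκη, mul_zero, sub_zero]
    -- `f` kills zero and doubles correctly
    have f0 : f 0 = 0 := by
      have h0 : symOp κ (0 : H) = 0 := by
        ext w; simp [symOp_apply]
      simp only [hf, h0]
      exact w2l_zero Δ hΔ κ κ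
    have ftwo : ∀ w : H, f (w + w) = 2 * f w := by
      intro w
      have h1 : symOp κ (w + w) = (2 : ℂ) • symOp κ w := by
        ext z
        simp only [symOp_apply, inner_add_left, ContinuousLinearMap.smul_apply, symOp_apply]
        module
      simp only [hf, h1]
      have := w2l_smul Δ hΔ (symOp κ w) 2 κ κ
      rw [this]
    -- the master identity (★)
    have star : ∀ p q ρ : H, ⟪η, p⟫ = 0 → ⟪κ, p⟫ = 0 → ⟪η, q⟫ = 0 → ⟪κ, q⟫ = 0 →
        ⟪η, ρ⟫ = 0 → ⟪κ, ρ⟫ = 0 →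
        ⟪η, Δ (symOp η (p + q)) η⟫ - ⟪η, Δ (symOp η p) η⟫ - ⟪η, Δ (symOp η q) η⟫
          = f (p + ρ) + f (-q + ρ) - f (p - q + ρ) - f ρ := by
      intro p q ρ hp1 hp2 hq1 hq2 hr1 hr2
      -- flipped orthogonality facts
      have hp1' : ⟪p, η⟫ = 0 := by rw [← inner_conj_symm p η, hp1, map_zero]
      have hp2' : ⟪p, κ⟫ = 0 := by rw [← inner_conj_symm p κ, hp2, map_zero]
      have hq1' : ⟪q, η⟫ = 0 := by rw [← inner_conj_symm q η, hq1, map_zero]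
      have hq2' : ⟪q, κ⟫ = 0 := by rw [← inner_conj_symm q κ, hq2, map_zero]
      have hr1' : ⟪ρ, η⟫ = 0 := by rw [← inner_conj_symm ρ η, hr1, map_zero]
      have hr2' : ⟪ρ, κ⟫ = 0 := by rw [← inner_conj_symm ρ κ, hr2, map_zero]
      have hηκ' : ⟪κ, η⟫ = 0 := hκη
      -- orthogonality of the combination vectors
      have w1η : ⟪p + q, η⟫ = 0 := by rw [inner_add_left, hp1', hq1', add_zero]
      have w1κ : ⟪p + q, κ⟫ = 0 := by rw [inner_add_left, hp2', hq2', add_zero]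
      have w2η : ⟪p - q + ρ, η⟫ = 0 := by
        rw [inner_add_left, inner_sub_left, hp1', hq1', hr1']; ring
      have w2κ : ⟪p - q + ρ, κ⟫ = 0 := by
        rw [inner_add_left, inner_sub_left, hp2', hq2', hr2']; ring
      have w3η : ⟪p + ρ, η⟫ = 0 := by rw [inner_add_left, hp1', hr1', add_zero]
      have w3κ : ⟪p + ρ, κ⟫ = 0 := by rw [inner_add_left, hp2', hr2', add_zero]
      have w4η : ⟪-q + ρ, η⟫ = 0 := by
        rw [inner_add_left, inner_neg_left, hq1', hr1']; ring
      have w4κ : ⟪-q + ρ, κ⟫ = 0 := by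
        rw [inner_add_left, inner_neg_left, hq2', hr2']; ring
      -- evaluations of the four auxiliary operators
      have hXη : (symOp η (p + q) + symOp κ (p - q + ρ)) η = p + q := by
        rw [ContinuousLinearMap.add_apply, symOp_eval η (p + q) hη w1η,
          symOp_eval0 κ (p - q + ρ) η hηκ' w2η, add_zero]
      have hXκ : (symOp η (p + q) + symOp κ (p - q + ρ)) κ = p - q + ρ := by
        rw [ContinuousLinearMap.add_apply, symOp_eval0 η (p + q) κ hηκ w1κ,
          symOp_eval κ (p - q + ρ) hκ w2κ, zero_add]
      have hYη : (symOp η p + symOp κ (p + ρ)) η = p := by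
        rw [ContinuousLinearMap.add_apply, symOp_eval η p hη hp1',
          symOp_eval0 κ (p + ρ) η hηκ' w3η, add_zero]
      have hYκ : (symOp η p + symOp κ (p + ρ)) κ = p + ρ := by
        rw [ContinuousLinearMap.add_apply, symOp_eval0 η p κ hηκ hp2',
          symOp_eval κ (p + ρ) hκ w3κ, zero_add]
      have hZη : (symOp η q + symOp κ (-q + ρ)) η = q := by
        rw [ContinuousLinearMap.add_apply, symOp_eval η q hη hq1',
          symOp_eval0 κ (-q + ρ) η hηκ' w4η, add_zero]
      have hZκ : (symOp η q + symOp κ (-q + ρ)) κ = -q + ρ := by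
        rw [ContinuousLinearMap.add_apply, symOp_eval0 η q κ hηκ hq2',
          symOp_eval κ (-q + ρ) hκ w4κ, zero_add]
      have hZ0η : (symOp κ ρ) η = 0 := symOp_eval0 κ ρ η hηκ' hr1'
      have hZ0κ : (symOp κ ρ) κ = ρ := symOp_eval κ ρ hκ hr2'
      -- self-adjointness
      have saX : IsSelfAdjoint (symOp η (p + q) + symOp κ (p - q + ρ)) :=
        (symOp_sa η (p + q)).add (symOp_sa κ (p - q + ρ))
      have saY : IsSelfAdjoint (symOp η p + symOp κ (p + ρ)) :=
        (symOp_sa η p).add (symOp_sa κ (p + ρ))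
      have saZ : IsSelfAdjoint (symOp η q + symOp κ (-q + ρ)) :=
        (symOp_sa η q).add (symOp_sa κ (-q + ρ))
      -- the key equalities
      have k4 : ⟪η, Δ (symOp η (p + q)) η⟫
          = ⟪η, Δ (symOp η (p + q) + symOp κ (p - q + ρ)) η⟫ :=
        w2l_key0 Δ hΔ ξ hξ _ _ (symOp_sa η (p + q)) saX η
          (by rw [hXη, symOp_eval η (p + q) hη w1η])
      have k5 : ⟪η, Δ (symOp η p) η⟫ = ⟪η, Δ (symOp η p + symOp κ (p + ρ)) η⟫ :=
        w2l_key0 Δ hΔ ξ hξ _ _ (symOp_sa η p) saY η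
          (by rw [hYη, symOp_eval η p hη hp1'])
      have k6 : ⟪η, Δ (symOp η q) η⟫ = ⟪η, Δ (symOp η q + symOp κ (-q + ρ)) η⟫ :=
        w2l_key0 Δ hΔ ξ hξ _ _ (symOp_sa η q) saZ η
          (by rw [hZη, symOp_eval η q hη hq1'])
      have k7 : ⟪η + κ, Δ (symOp η (p + q) + symOp κ (p - q + ρ)) (η + κ)⟫
          = ⟪η + κ, Δ (symOp η p + symOp κ (p + ρ)) (η + κ)⟫ :=
        w2l_key0 Δ hΔ ξ hξ _ _ saX saY (η + κ)
          (by rw [map_add, map_add, hXη, hXκ, hYη, hYκ]; abel)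
      have k8 : ⟪η - κ, Δ (symOp η (p + q) + symOp κ (p - q + ρ)) (η - κ)⟫
          = ⟪η - κ, Δ (symOp η q + symOp κ (-q + ρ)) (η - κ)⟫ :=
        w2l_key0 Δ hΔ ξ hξ _ _ saX saZ (η - κ)
          (by rw [map_sub, map_sub, hXη, hXκ, hZη, hZκ]; abel)
      have k9 : ⟪η + κ, Δ (symOp η q + symOp κ (-q + ρ)) (η + κ)⟫
          = ⟪η + κ, Δ (symOp κ ρ) (η + κ)⟫ :=
        w2l_key0 Δ hΔ ξ hξ _ _ saZ (symOp_sa κ ρ) (η + κ)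
          (by rw [map_add, map_add, hZη, hZκ, hZ0η, hZ0κ]; abel)
      have k10 : ⟪η - κ, Δ (symOp η p + symOp κ (p + ρ)) (η - κ)⟫
          = ⟪η - κ, Δ (symOp κ ρ) (η - κ)⟫ :=
        w2l_key0 Δ hΔ ξ hξ _ _ saY (symOp_sa κ ρ) (η - κ)
          (by rw [map_sub, map_sub, hYη, hYκ, hZ0η, hZ0κ]; abel)
      have k11 : ⟪η, Δ (symOp κ ρ) η⟫ = ⟪η, Δ 0 η⟫ :=
        w2l_key0 Δ hΔ ξ hξ _ _ (symOp_sa κ ρ) (by simp [IsSelfAdjoint]) η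
          (by rw [hZ0η, ContinuousLinearMap.zero_apply])
      have hΔ0 : ⟪η, Δ (0 : H →L[ℂ] H) η⟫ = 0 := w2l_zero Δ hΔ η η
      have k12 : ⟪κ, Δ (symOp η (p + q) + symOp κ (p - q + ρ)) κ⟫
          = ⟪κ, Δ (symOp κ (p - q + ρ)) κ⟫ :=
        w2l_key0 Δ hΔ ξ hξ _ _ saX (symOp_sa κ (p - q + ρ)) κ
          (by rw [hXκ, symOp_eval κ (p - q + ρ) hκ w2κ])
      have k13 : ⟪κ, Δ (symOp η p + symOp κ (p + ρ)) κ⟫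
          = ⟪κ, Δ (symOp κ (p + ρ)) κ⟫ :=
        w2l_key0 Δ hΔ ξ hξ _ _ saY (symOp_sa κ (p + ρ)) κ
          (by rw [hYκ, symOp_eval κ (p + ρ) hκ w3κ])
      have k14 : ⟪κ, Δ (symOp η q + symOp κ (-q + ρ)) κ⟫
          = ⟪κ, Δ (symOp κ (-q + ρ)) κ⟫ :=
        w2l_key0 Δ hΔ ξ hξ _ _ saZ (symOp_sa κ (-q + ρ)) κ
          (by rw [hZκ, symOp_eval κ (-q + ρ) hκ w4κ])
      -- trace identities
      have tX := trace3 (Δ (symOp η (p + q) + symOp κ (p - q + ρ))) η κ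
      have tY := trace3 (Δ (symOp η p + symOp κ (p + ρ))) η κ
      have tZ := trace3 (Δ (symOp η q + symOp κ (-q + ρ))) η κ
      have tZ0 := trace3 (Δ (symOp κ ρ)) η κ
      -- assemble
      simp only [hf]
      linear_combination k4 - k5 - k6 + tX - tY - tZ + (1/2 : ℂ) * k7 + (1/2 : ℂ) * k8
        - (1/2 : ℂ) * k9 - (1/2 : ℂ) * k10 + tZ0 - k11 - hΔ0 - k12 + k13 + k14
    -- additivity of `f`
    have fadd : ∀ p q : H, ⟪η, p⟫ = 0 → ⟪κ, p⟫ = 0 → ⟪η, q⟫ = 0 → ⟪κ, q⟫ = 0 →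
        f (p + q) = f p + f q := by
      intro p q hp1 hp2 hq1 hq2
      have hnq1 : ⟪η, -q⟫ = 0 := by rw [inner_neg_right, hq1, neg_zero]
      have hnq2 : ⟪κ, -q⟫ = 0 := by rw [inner_neg_right, hq2, neg_zero]
      have hnpq1 : ⟪η, -(p + q)⟫ = 0 := by
        rw [inner_neg_right, inner_add_right, hp1, hq1]; ring
      have hnpq2 : ⟪κ, -(p + q)⟫ = 0 := by
        rw [inner_neg_right, inner_add_right, hp2, hq2]; ring
      have hnp1 : ⟪η, -p⟫ = 0 := by rw [inner_neg_right, hp1, neg_zero]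
      have hnp2 : ⟪κ, -p⟫ = 0 := by rw [inner_neg_right, hp2, neg_zero]
      have h01 : ⟪η, (0 : H)⟫ = 0 := inner_zero_right η
      have h02 : ⟪κ, (0 : H)⟫ = 0 := inner_zero_right κ
      have S0 := star p (-q) 0 hp1 hp2 hnq1 hnq2 h01 h02
      have S1 := star p (-q) q hp1 hp2 hnq1 hnq2 hq1 hq2
      have S3a := star p (-(p + q)) 0 hp1 hp2 hnpq1 hnpq2 h01 h02
      have S3b := star p (-(p + q)) q hp1 hp2 hnpq1 hnpq2 hq1 hq2
      have S5a := star p (-p) 0 hp1 hp2 hnp1 hnp2 h01 h02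
      have S5b := star p (-p) q hp1 hp2 hnp1 hnp2 hq1 hq2
      simp only [add_zero, neg_neg, sub_neg_eq_add] at S0 S1 S3a S3b S5a S5b
      -- align vector arguments
      rw [show p + (p + q) + q = p + q + (p + q) from by abel] at S3b
      rw [show p + (p + q) = p + p + q from by abel] at S3a
      have ftq := ftwo q
      have ftp := ftwo p
      have ftpq := ftwo (p + q)
      linear_combination (1/2 : ℂ) * S0 - (1/2 : ℂ) * S1 + (1/2 : ℂ) * S3a
        - (1/2 : ℂ) * S3b + (1/2 : ℂ) * S5a - (1/2 : ℂ) * S5b - (1/2 : ℂ) * ftq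
        - (1/2 : ℂ) * ftp + (1/2 : ℂ) * ftpq - (3/2 : ℂ) * f0
    -- transfer `Δ(a+b), Δ a, Δ b` to the canonical representatives
    have huv : ⟪u + v, η⟫ = 0 := by
      rw [inner_add_left, ← inner_conj_symm u η, ← inner_conj_symm v η, hηu, hηv]
      simp
    have hu' : ⟪u, η⟫ = 0 := by rw [← inner_conj_symm u η, hηu, map_zero]
    have hv' : ⟪v, η⟫ = 0 := by rw [← inner_conj_symm v η, hηv, map_zero]
    have K1 : ⟪η, Δ (a + b) η⟫ = ⟪η, Δ (symOp η (u + v)) η⟫ := by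
      refine w2l_keyR Δ hΔ ξ hξ _ _ (ha.add hb) (symOp_sa η (u + v)) η (ru + rv) ?_ ?_
      · rw [map_add, hru, hrv]
      · rw [ContinuousLinearMap.add_apply, symOp_eval η (u + v) hη huv, hu_def, hv_def]
        module
    have K2 : ⟪η, Δ a η⟫ = ⟪η, Δ (symOp η u) η⟫ := by
      refine w2l_keyR Δ hΔ ξ hξ _ _ ha (symOp_sa η u) η ru hru ?_
      rw [symOp_eval η u hη hu', hu_def]
      module
    have K3 : ⟪η, Δ b η⟫ = ⟪η, Δ (symOp η v) η⟫ := by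
      refine w2l_keyR Δ hΔ ξ hξ _ _ hb (symOp_sa η v) η rv hrv ?_
      rw [symOp_eval η v hη hv', hv_def]
      module
    have hstar := star u v 0 hηu hκu hηv hκv (inner_zero_right η) (inner_zero_right κ)
    simp only [add_zero] at hstar
    have hfa := fadd u (-v) hηu hκu
      (by rw [inner_neg_right, hηv, neg_zero]) (by rw [inner_neg_right, hκv, neg_zero])
    rw [show u + -v = u - v from by abel] at hfa
    linear_combination K1 - K2 - K3 + hstar - hfa - f0
  -- conclusion: the operator `Δ(a+b) - (Δ a + Δ b)` has vanishing quadratic form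
  have hq : ∀ w : H, ⟪(Δ (a + b) - (Δ a + Δ b)) w, w⟫ = 0 := by
    intro w
    rcases eq_or_ne w 0 with rfl | hw
    · simp
    · have hwn : ‖w‖ ≠ 0 := norm_ne_zero_iff.mpr hw
      set c : ℂ := ((‖w‖⁻¹ : ℝ) : ℂ) with hcdef
      have hcc : (starRingEnd ℂ) c = c := Complex.conj_ofReal _
      have hcn : c ≠ 0 := by
        rw [hcdef]
        simpa using hwn
      have hunit : ⟪c • w, c • w⟫ = 1 := by
        rw [inner_smul_left, inner_smul_right, hcc, hcdef, inner_self_eq_norm_sq_to_K]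
        push_cast
        field_simp
        rw [sq]
        have hcast : ((‖w‖ : ℝ) : ℂ) ≠ 0 := by exact_mod_cast hwn
        exact (div_eq_one_iff_eq (pow_ne_zero 2 hcast)).mpr (by rw [sq]; rfl)
      have hm := main (c • w) hunit
      have e1 : ∀ T : H →L[ℂ] H, ⟪c • w, T (c • w)⟫
          = (starRingEnd ℂ) c * (c * ⟪w, T w⟫) := by
        intro T
        rw [map_smul, inner_smul_left, inner_smul_right]
      rw [e1, e1, e1, ← mul_add, ← mul_add] at hm
      have hm2 := mul_left_cancel₀ (show (starRingEnd ℂ) c ≠ 0 by rw [hcc]; exact hcn) hm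
      have hm3 := mul_left_cancel₀ hcn hm2
      have hthis : ⟪w, (Δ (a + b) - (Δ a + Δ b)) w⟫ = 0 := by
        rw [ContinuousLinearMap.sub_apply, ContinuousLinearMap.add_apply,
          inner_sub_right, inner_add_right, hm3]
        ring
      rw [← inner_conj_symm ((Δ (a + b) - (Δ a + Δ b)) w) w, hthis, map_zero]
  have hz : (((Δ (a + b) - (Δ a + Δ b)) : H →L[ℂ] H) : H →ₗ[ℂ] H) = 0 :=
    (inner_map_self_eq_zero _).mp (fun x => hq x)
  have hfin : (Δ (a + b) - (Δ a + Δ b)) = 0 := by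
    ext w
    have := congrArg (fun (T : H →ₗ[ℂ] H) => T w) hz
    simpa using this
  exact sub_eq_zero.mp hfin
end
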